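/- arXiv:2510.06981 — 3 statements merged into one kernel-verified Lean document; each statement's English description precedes it below -/
import Mathlib

section
/- Let 0 ≤ t < T, let {φ_j}_{j=0}^∞ be an arbitrary complete orthonormal system of L²([t,T],ℝ), and let ψ₁, ψ₂, ψ₃ : [t,T] → ℝ be continuous. Then for every fixed j₂ ∈ ℕ, lim_{p→∞} Σ_{j=0}^p C_{j j₂ j} = 0. -/
open MeasureTheory Filter Finset

namespace Stmt5Aux

variable {μ : Measure ℝ}

lemma inner_toLp {f g : ℝ → ℝ} (hf : MemLp f 2 μ) (hg : MemLp g 2 μ) :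
    (inner ℝ (hf.toLp f) (hg.toLp g) : ℝ) = ∫ x, f x * g x ∂μ := by
  rw [L2.inner_def]
  refine integral_congr_ae ?_
  filter_upwards [hf.coeFn_toLp, hg.coeFn_toLp] with x hx hy
  simp [hx, hy, RCLike.inner_apply, mul_comm]

lemma integrable_mul' {f g : ℝ → ℝ} (hf : MemLp f 2 μ) (hg : MemLp g 2 μ) :
    Integrable (fun x => f x * g x) μ := by
  have h := L2.integrable_inner (𝕜 := ℝ) (hf.toLp f) (hg.toLp g)
  refine h.congr ?_
  filter_upwards [hf.coeFn_toLp, hg.coeFn_toLp] with x hx hy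
  simp [hx, hy, RCLike.inner_apply, mul_comm]

lemma swap_triangle {t T : ℝ} (htT : t ≤ T) {g h : ℝ → ℝ}
    (hg : IntegrableOn g (Set.Ioc t T)) (hh : IntegrableOn h (Set.Ioc t T)) :
    (∫ s in t..T, g s * ∫ u in t..s, h u) =
      ∫ u in Set.Ioc t T, h u * ∫ s in u..T, g s := by
  set P : Set (ℝ × ℝ) := {q : ℝ × ℝ | q.2 ≤ q.1} with hPdef
  have hP : MeasurableSet P := measurableSet_le measurable_snd measurable_fst
  set ν := volume.restrict (Set.Ioc t T) with hν
  set F : ℝ × ℝ → ℝ := P.indicator (fun q => g q.1 * h q.2) with hF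
  have hint : Integrable F (ν.prod ν) := (hg.mul_prod hh).indicator hP
  have swap : (∫ s, ∫ u, F (s, u) ∂ν ∂ν) = ∫ u, ∫ s, F (s, u) ∂ν ∂ν :=
    integral_integral_swap hint
  have lhs : (∫ s in t..T, g s * ∫ u in t..s, h u) = ∫ s, ∫ u, F (s, u) ∂ν ∂ν := by
    rw [intervalIntegral.integral_of_le htT]
    refine setIntegral_congr_fun measurableSet_Ioc (fun s hs => ?_)
    have h1 : (fun u => F (s, u)) = (Set.Iic s).indicator (fun u => g s * h u) := by
      funext u
      by_cases hu : u ≤ s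
      · simp [hF, Set.indicator_apply, hPdef, hu]
      · simp [hF, Set.indicator_apply, hPdef, hu]
    rw [h1, integral_indicator measurableSet_Iic, hν,
      Measure.restrict_restrict measurableSet_Iic]
    have h2 : Set.Iic s ∩ Set.Ioc t T = Set.Ioc t s := by
      ext x
      simp only [Set.mem_inter_iff, Set.mem_Iic, Set.mem_Ioc]
      constructor
      · rintro ⟨h1', h2', _⟩; exact ⟨h2', h1'⟩
      · rintro ⟨h1', h2'⟩; exact ⟨h2', h1', h2'.trans hs.2⟩
    rw [h2, intervalIntegral.integral_of_le hs.1.le, ← integral_const_mul]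
  have rhs : (∫ u, ∫ s, F (s, u) ∂ν ∂ν) = ∫ u in Set.Ioc t T, h u * ∫ s in u..T, g s := by
    refine setIntegral_congr_fun measurableSet_Ioc (fun u hu => ?_)
    have h1 : (fun s => F (s, u)) = (Set.Ici u).indicator (fun s => g s * h u) := by
      funext s
      by_cases hs : u ≤ s
      · simp [hF, Set.indicator_apply, hPdef, hs]
      · simp [hF, Set.indicator_apply, hPdef, hs]
    rw [h1, integral_indicator measurableSet_Ici, hν,
      Measure.restrict_restrict measurableSet_Ici]
    have h2 : Set.Ici u ∩ Set.Ioc t T = Set.Icc u T := by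
      ext x
      simp only [Set.mem_inter_iff, Set.mem_Ici, Set.mem_Icc, Set.mem_Ioc]
      constructor
      · rintro ⟨h1', _, h3'⟩; exact ⟨h1', h3'⟩
      · rintro ⟨h1', h2'⟩; exact ⟨h1', hu.1.trans_le h1', h2'⟩
    rw [h2, intervalIntegral.integral_of_le hu.2, integral_mul_const,
      ← Measure.restrict_congr_set Ioc_ae_eq_Icc, mul_comm]
  rw [lhs, swap, rhs]

end Stmt5Aux

local notation "⟪" x ", " y "⟫" => @inner ℝ _ _ x y

/-- contraction identity (k = 3, r = 1, non-adjacent pair {1,3}): for each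
fixed `j₂`, `lim_{p→∞} Σ_{j=0}^p C_{j j₂ j} = 0`. -/
theorem stmt5
    (t T : ℝ) (ht : 0 ≤ t) (htT : t < T)
    (φ : ℕ → ℝ → ℝ)
    (hφ_mem : ∀ j, MemLp (φ j) 2 (volume.restrict (Set.Icc t T)))
    (hφ_on : ∀ i j, (∫ x in Set.Icc t T, φ i x * φ j x) = if i = j then (1 : ℝ) else 0)
    (hφ_complete : ∀ f : ℝ → ℝ, MemLp f 2 (volume.restrict (Set.Icc t T)) →
      (∀ j, (∫ x in Set.Icc t T, f x * φ j x) = 0) →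
      f =ᵐ[volume.restrict (Set.Icc t T)] 0)
    (ψ₁ ψ₂ ψ₃ : ℝ → ℝ)
    (hψ₁ : ContinuousOn ψ₁ (Set.Icc t T)) (hψ₂ : ContinuousOn ψ₂ (Set.Icc t T))
    (hψ₃ : ContinuousOn ψ₃ (Set.Icc t T))
    (C : ℕ → ℕ → ℕ → ℝ)
    (hC : ∀ j₃ j₂ j₁, C j₃ j₂ j₁ =
      ∫ t₃ in t..T, ψ₃ t₃ * φ j₃ t₃ *
        ∫ t₂ in t..t₃, ψ₂ t₂ * φ j₂ t₂ *
          ∫ t₁ in t..t₂, ψ₁ t₁ * φ j₁ t₁)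
    (j₂ : ℕ) :
    Tendsto (fun p => ∑ j ∈ Finset.range (p + 1), C j j₂ j) atTop (nhds 0) := by
  classical
  have hTt : t ≤ T := htT.le
  set μ : Measure ℝ := volume.restrict (Set.Icc t T) with hμdef
  haveI : IsFiniteMeasure μ := by
    constructor
    rw [hμdef, Measure.restrict_apply_univ, Real.volume_Icc]
    exact ENNReal.ofReal_lt_top
  have hae : ∀ᵐ x ∂μ, x ∈ Set.Icc t T := by
    rw [hμdef]; exact ae_restrict_mem measurableSet_Icc
  -- bounds for the ψ's
  obtain ⟨K₁, hK₁⟩ := isCompact_Icc.exists_bound_of_continuousOn hψ₁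
  obtain ⟨K₂, hK₂⟩ := isCompact_Icc.exists_bound_of_continuousOn hψ₂
  obtain ⟨K₃, hK₃⟩ := isCompact_Icc.exists_bound_of_continuousOn hψ₃
  have hK₁0 : 0 ≤ K₁ := le_trans (norm_nonneg _) (hK₁ t (Set.left_mem_Icc.2 hTt))
  have hK₂0 : 0 ≤ K₂ := le_trans (norm_nonneg _) (hK₂ t (Set.left_mem_Icc.2 hTt))
  have hK₃0 : 0 ≤ K₃ := le_trans (norm_nonneg _) (hK₃ t (Set.left_mem_Icc.2 hTt))
  have hψ₁m : AEStronglyMeasurable ψ₁ μ := hψ₁.aestronglyMeasurable measurableSet_Icc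
  have hψ₂m : AEStronglyMeasurable ψ₂ μ := hψ₂.aestronglyMeasurable measurableSet_Icc
  have hψ₃m : AEStronglyMeasurable ψ₃ μ := hψ₃.aestronglyMeasurable measurableSet_Icc
  have hψ₁mem : MemLp ψ₁ 2 μ := MemLp.of_bound hψ₁m K₁
    (by filter_upwards [hae] with x hx using hK₁ x hx)
  have hψ₂mem : MemLp ψ₂ 2 μ := MemLp.of_bound hψ₂m K₂
    (by filter_upwards [hae] with x hx using hK₂ x hx)
  have hψ₃mem : MemLp ψ₃ 2 μ := MemLp.of_bound hψ₃m K₃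
    (by filter_upwards [hae] with x hx using hK₃ x hx)
  -- the Hilbert basis
  set v : ℕ → Lp ℝ 2 μ := fun j => (hφ_mem j).toLp (φ j) with hv
  have hon : Orthonormal ℝ v := by
    rw [orthonormal_iff_ite]
    intro i j
    rw [hv]
    rw [Stmt5Aux.inner_toLp (hφ_mem i) (hφ_mem j)]
    exact hφ_on i j
  have hsp : (Submodule.span ℝ (Set.range v))ᗮ = ⊥ := by
    rw [Submodule.eq_bot_iff]
    intro x hx
    have hx' : ∀ j, ⟪v j, x⟫ = 0 := fun j =>
      (Submodule.mem_orthogonal _ x).1 hx (v j) (Submodule.subset_span (Set.mem_range_self j))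
    have key : ∀ j, (∫ a, x a * φ j a ∂μ) = 0 := by
      intro j
      have h0 := hx' j
      rw [L2.inner_def] at h0
      rw [← h0]
      refine integral_congr_ae ?_
      filter_upwards [(hφ_mem j).coeFn_toLp] with a ha
      simp [hv, ha, RCLike.inner_apply, mul_comm]
    exact Lp.eq_zero_iff_ae_eq_zero.2 (hφ_complete x (Lp.memLp x) key)
  set b := HilbertBasis.mkOfOrthogonalEqBot hon hsp with hb
  have hbv : ⇑b = v := HilbertBasis.coe_mkOfOrthogonalEqBot hon hsp
  -- indicator functions
  have hmem₁ : ∀ u : ℝ, MemLp ((Set.Ioc t u).indicator ψ₁) 2 μ :=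
    fun u => hψ₁mem.indicator measurableSet_Ioc
  have hmem₃ : ∀ u : ℝ, MemLp ((Set.Ioc u T).indicator ψ₃) 2 μ :=
    fun u => hψ₃mem.indicator measurableSet_Ioc
  set A : ℕ → ℝ → ℝ := fun j u => ∫ s in t..u, ψ₁ s * φ j s with hA
  set Cc : ℕ → ℝ → ℝ := fun j u => ∫ s in u..T, ψ₃ s * φ j s with hCc
  have hinner₁ : ∀ u ∈ Set.Icc t T, ∀ j,
      ⟪((hmem₁ u).toLp _), v j⟫ = A j u := by
    intro u hu j
    rw [Stmt5Aux.inner_toLp (hmem₁ u) (hφ_mem j)]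
    have he : (fun x => (Set.Ioc t u).indicator ψ₁ x * φ j x)
        = (Set.Ioc t u).indicator (fun x => ψ₁ x * φ j x) := by
      funext x; by_cases hx : x ∈ Set.Ioc t u <;> simp [Set.indicator_apply, hx]
    rw [he, integral_indicator measurableSet_Ioc, hμdef,
      Measure.restrict_restrict measurableSet_Ioc]
    have hsub : Set.Ioc t u ∩ Set.Icc t T = Set.Ioc t u :=
      Set.inter_eq_self_of_subset_left (fun x hx => ⟨hx.1.le, hx.2.trans hu.2⟩)
    rw [hsub, ← intervalIntegral.integral_of_le hu.1]
  have hinner₃ : ∀ u ∈ Set.Icc t T, ∀ j,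
      ⟪v j, ((hmem₃ u).toLp _)⟫ = Cc j u := by
    intro u hu j
    rw [Stmt5Aux.inner_toLp (hφ_mem j) (hmem₃ u)]
    have he : (fun x => φ j x * (Set.Ioc u T).indicator ψ₃ x)
        = (Set.Ioc u T).indicator (fun x => ψ₃ x * φ j x) := by
      funext x; by_cases hx : x ∈ Set.Ioc u T <;> simp [Set.indicator_apply, hx, mul_comm]
    rw [he, integral_indicator measurableSet_Ioc, hμdef,
      Measure.restrict_restrict measurableSet_Ioc]
    have hsub : Set.Ioc u T ∩ Set.Icc t T = Set.Ioc u T :=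
      Set.inter_eq_self_of_subset_left (fun x hx => ⟨hu.1.trans hx.1.le, hx.2⟩)
    rw [hsub, ← intervalIntegral.integral_of_le hu.2]
  have hperp : ∀ u, ⟪((hmem₁ u).toLp _), ((hmem₃ u).toLp _)⟫ = 0 := by
    intro u
    rw [Stmt5Aux.inner_toLp (hmem₁ u) (hmem₃ u)]
    have he : (fun x => (Set.Ioc t u).indicator ψ₁ x * (Set.Ioc u T).indicator ψ₃ x)
        = fun _ => (0 : ℝ) := by
      funext x
      by_cases hx : x ∈ Set.Ioc t u
      · have hx' : x ∉ Set.Ioc u T := fun hx' => absurd hx.2 (not_le.2 hx'.1)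
        simp [Set.indicator_of_notMem hx']
      · simp [Set.indicator_of_notMem hx]
    rw [he, integral_zero]
  -- Parseval pointwise
  have hS0 : ∀ u ∈ Set.Icc t T,
      Tendsto (fun p => ∑ j ∈ Finset.range (p + 1), A j u * Cc j u) atTop (nhds 0) := by
    intro u hu
    have hsum : HasSum (fun j => A j u * Cc j u) 0 := by
      have h := b.hasSum_inner_mul_inner ((hmem₁ u).toLp _) ((hmem₃ u).toLp _)
      rw [hperp u] at h
      have he : (fun i => ⟪((hmem₁ u).toLp _), b i⟫ * ⟪b i, ((hmem₃ u).toLp _)⟫)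
          = fun j => A j u * Cc j u := by
        funext j
        rw [hbv, hinner₁ u hu j, hinner₃ u hu j]
      rwa [he] at h
    exact hsum.tendsto_sum_nat.comp (tendsto_add_atTop_nat 1)
  -- norm bounds
  have hnorm₁ : ∀ u ∈ Set.Icc t T, ‖(hmem₁ u).toLp _‖ ^ 2 ≤ K₁ ^ 2 * (T - t) := by
    intro u hu
    rw [← real_inner_self_eq_norm_sq, Stmt5Aux.inner_toLp (hmem₁ u) (hmem₁ u)]
    have hi : Integrable
        (fun x => (Set.Ioc t u).indicator ψ₁ x * (Set.Ioc t u).indicator ψ₁ x) μ :=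
      Stmt5Aux.integrable_mul' (hmem₁ u) (hmem₁ u)
    have hle : ∀ᵐ x ∂μ,
        (Set.Ioc t u).indicator ψ₁ x * (Set.Ioc t u).indicator ψ₁ x ≤ K₁ ^ 2 := by
      filter_upwards [hae] with x hx
      by_cases hx' : x ∈ Set.Ioc t u
      · have hb1 := hK₁ x hx
        rw [Real.norm_eq_abs] at hb1
        simp only [Set.indicator_of_mem hx']
        nlinarith [abs_nonneg (ψ₁ x), le_abs_self (ψ₁ x), neg_abs_le (ψ₁ x)]
      · simp only [Set.indicator_of_notMem hx', mul_zero]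
        positivity
    calc (∫ x, (Set.Ioc t u).indicator ψ₁ x * (Set.Ioc t u).indicator ψ₁ x ∂μ)
        ≤ ∫ _, K₁ ^ 2 ∂μ := integral_mono_ae hi (integrable_const _) hle
      _ = K₁ ^ 2 * (T - t) := by
          simp [integral_const, hμdef, Measure.restrict_apply_univ, Real.volume_Icc,
            ENNReal.toReal_ofReal (sub_nonneg.2 hTt), max_eq_left (sub_nonneg.2 hTt), mul_comm]
  have hnorm₃ : ∀ u ∈ Set.Icc t T, ‖(hmem₃ u).toLp _‖ ^ 2 ≤ K₃ ^ 2 * (T - t) := by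
    intro u hu
    rw [← real_inner_self_eq_norm_sq, Stmt5Aux.inner_toLp (hmem₃ u) (hmem₃ u)]
    have hi : Integrable
        (fun x => (Set.Ioc u T).indicator ψ₃ x * (Set.Ioc u T).indicator ψ₃ x) μ :=
      Stmt5Aux.integrable_mul' (hmem₃ u) (hmem₃ u)
    have hle : ∀ᵐ x ∂μ,
        (Set.Ioc u T).indicator ψ₃ x * (Set.Ioc u T).indicator ψ₃ x ≤ K₃ ^ 2 := by
      filter_upwards [hae] with x hx
      by_cases hx' : x ∈ Set.Ioc u T
      · have hb1 := hK₃ x hx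
        rw [Real.norm_eq_abs] at hb1
        simp only [Set.indicator_of_mem hx']
        nlinarith [abs_nonneg (ψ₃ x), le_abs_self (ψ₃ x), neg_abs_le (ψ₃ x)]
      · simp only [Set.indicator_of_notMem hx', mul_zero]
        positivity
    calc (∫ x, (Set.Ioc u T).indicator ψ₃ x * (Set.Ioc u T).indicator ψ₃ x ∂μ)
        ≤ ∫ _, K₃ ^ 2 ∂μ := integral_mono_ae hi (integrable_const _) hle
      _ = K₃ ^ 2 * (T - t) := by
          simp [integral_const, hμdef, Measure.restrict_apply_univ, Real.volume_Icc,
            ENNReal.toReal_ofReal (sub_nonneg.2 hTt), max_eq_left (sub_nonneg.2 hTt), mul_comm]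
  set Mc : ℝ := Real.sqrt ((K₁ ^ 2 * (T - t)) * (K₃ ^ 2 * (T - t))) with hMc
  have hMc0 : 0 ≤ Mc := Real.sqrt_nonneg _
  have hSbd : ∀ u ∈ Set.Icc t T, ∀ p,
      |∑ j ∈ Finset.range (p + 1), A j u * Cc j u| ≤ Mc := by
    intro u hu p
    have hCS := Finset.sum_mul_sq_le_sq_mul_sq (Finset.range (p + 1))
      (fun j => A j u) (fun j => Cc j u)
    have hA2 : (∑ j ∈ Finset.range (p + 1), (A j u) ^ 2) ≤ K₁ ^ 2 * (T - t) := by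
      have h1 : (∑ j ∈ Finset.range (p + 1), (A j u) ^ 2)
          = ∑ j ∈ Finset.range (p + 1), ‖⟪v j, ((hmem₁ u).toLp _)⟫‖ ^ 2 := by
        refine Finset.sum_congr rfl fun j _ => ?_
        rw [real_inner_comm, hinner₁ u hu j, Real.norm_eq_abs, sq_abs]
      rw [h1]
      exact le_trans (hon.sum_inner_products_le _) (hnorm₁ u hu)
    have hC2 : (∑ j ∈ Finset.range (p + 1), (Cc j u) ^ 2) ≤ K₃ ^ 2 * (T - t) := by
      have h1 : (∑ j ∈ Finset.range (p + 1), (Cc j u) ^ 2)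
          = ∑ j ∈ Finset.range (p + 1), ‖⟪v j, ((hmem₃ u).toLp _)⟫‖ ^ 2 := by
        refine Finset.sum_congr rfl fun j _ => ?_
        rw [hinner₃ u hu j, Real.norm_eq_abs, sq_abs]
      rw [h1]
      exact le_trans (hon.sum_inner_products_le _) (hnorm₃ u hu)
    have hnn1 : (0 : ℝ) ≤ ∑ j ∈ Finset.range (p + 1), (Cc j u) ^ 2 :=
      Finset.sum_nonneg fun j _ => sq_nonneg _
    have h2 : (∑ j ∈ Finset.range (p + 1), A j u * Cc j u) ^ 2
        ≤ (K₁ ^ 2 * (T - t)) * (K₃ ^ 2 * (T - t)) :=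
      le_trans hCS (mul_le_mul hA2 hC2 hnn1
        (mul_nonneg (sq_nonneg _) (sub_nonneg.2 hTt)))
    calc |∑ j ∈ Finset.range (p + 1), A j u * Cc j u|
        = Real.sqrt ((∑ j ∈ Finset.range (p + 1), A j u * Cc j u) ^ 2) :=
          (Real.sqrt_sq_eq_abs _).symm
      _ ≤ Mc := Real.sqrt_le_sqrt h2
  -- integrability facts
  have h1IntIcc : IntegrableOn (fun s => ψ₁ s * φ 0 s) (Set.Icc t T) volume := by
    have := Stmt5Aux.integrable_mul' hψ₁mem (hφ_mem 0); rwa [hμdef] at this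
  have h1Int : ∀ j, IntegrableOn (fun s => ψ₁ s * φ j s) (Set.Icc t T) volume := by
    intro j; have := Stmt5Aux.integrable_mul' hψ₁mem (hφ_mem j); rwa [hμdef] at this
  have h3Int : ∀ j, IntegrableOn (fun s => ψ₃ s * φ j s) (Set.Icc t T) volume := by
    intro j; have := Stmt5Aux.integrable_mul' hψ₃mem (hφ_mem j); rwa [hμdef] at this
  -- continuity of primitives
  have hprim : ∀ f : ℝ → ℝ, IntegrableOn f (Set.Icc t T) volume →
      ContinuousOn (fun u => ∫ s in t..u, f s) (Set.Icc t T) := by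
    intro f hf
    exact (intervalIntegral.continuousOn_primitive hf).congr
      fun u hu => intervalIntegral.integral_of_le hu.1
  have hAcont : ∀ j, ContinuousOn (A j) (Set.Icc t T) := fun j => hprim _ (h1Int j)
  have hCccont : ∀ j, ContinuousOn (Cc j) (Set.Icc t T) := by
    intro j
    have hx : Set.EqOn (Cc j)
        (fun u => (∫ s in t..T, ψ₃ s * φ j s) - ∫ s in t..u, ψ₃ s * φ j s)
        (Set.Icc t T) := by
      intro u hu
      have hi1 : IntervalIntegrable (fun s => ψ₃ s * φ j s) volume t u :=
        (intervalIntegrable_iff_integrableOn_Ioc_of_le hu.1).2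
          ((h3Int j).mono_set (fun x hx => ⟨hx.1.le, hx.2.trans hu.2⟩))
      have hi2 : IntervalIntegrable (fun s => ψ₃ s * φ j s) volume u T :=
        (intervalIntegrable_iff_integrableOn_Ioc_of_le hu.2).2
          ((h3Int j).mono_set (fun x hx => ⟨hu.1.trans hx.1.le, hx.2⟩))
      have hadj := intervalIntegral.integral_add_adjacent_intervals hi1 hi2
      simp only [hCc]
      linarith
    exact (continuousOn_const.sub (hprim _ (h3Int j))).congr hx
  -- bounds on A and Cc
  set B₁ : ℕ → ℝ := fun j => ∫ x in Set.Icc t T, |ψ₁ x * φ j x| with hB₁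
  set B₃ : ℕ → ℝ := fun j => ∫ x in Set.Icc t T, |ψ₃ x * φ j x| with hB₃
  have hAbd : ∀ j, ∀ u ∈ Set.Icc t T, |A j u| ≤ B₁ j := by
    intro j u hu
    calc |A j u| ≤ ∫ s in t..u, |ψ₁ s * φ j s| :=
          intervalIntegral.abs_integral_le_integral_abs hu.1
      _ = ∫ s in Set.Ioc t u, |ψ₁ s * φ j s| := intervalIntegral.integral_of_le hu.1
      _ ≤ B₁ j := setIntegral_mono_set ((h1Int j).abs)
          (Eventually.of_forall fun x => abs_nonneg _)
          (HasSubset.Subset.eventuallyLE (fun x hx => ⟨hx.1.le, hx.2.trans hu.2⟩))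
  have hCcbd : ∀ j, ∀ u ∈ Set.Icc t T, |Cc j u| ≤ B₃ j := by
    intro j u hu
    calc |Cc j u| ≤ ∫ s in u..T, |ψ₃ s * φ j s| :=
          intervalIntegral.abs_integral_le_integral_abs hu.2
      _ = ∫ s in Set.Ioc u T, |ψ₃ s * φ j s| := intervalIntegral.integral_of_le hu.2
      _ ≤ B₃ j := setIntegral_mono_set ((h3Int j).abs)
          (Eventually.of_forall fun x => abs_nonneg _)
          (HasSubset.Subset.eventuallyLE (fun x hx => ⟨hu.1.trans hx.1.le, hx.2⟩))
  have hφ₂int : Integrable (fun x => ψ₂ x * φ j₂ x) μ :=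
    Stmt5Aux.integrable_mul' hψ₂mem (hφ_mem j₂)
  -- integrability of the terms
  have hterm : ∀ j, Integrable (fun u => ψ₂ u * φ j₂ u * A j u * Cc j u) μ := by
    intro j
    refine Integrable.mono' (hφ₂int.abs.const_mul (B₁ j * B₃ j)) ?_ ?_
    · exact ((hψ₂m.mul (hφ_mem j₂).1).mul
        ((hAcont j).aestronglyMeasurable measurableSet_Icc)).mul
        ((hCccont j).aestronglyMeasurable measurableSet_Icc)
    · filter_upwards [hae] with u hu
      have h1 := hAbd j u hu
      have h2 := hCcbd j u hu
      have hB₁0 : 0 ≤ B₁ j := le_trans (abs_nonneg _) h1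
      have hB₃0 : 0 ≤ B₃ j := le_trans (abs_nonneg _) h2
      have he : ‖ψ₂ u * φ j₂ u * A j u * Cc j u‖
          = |ψ₂ u * φ j₂ u| * |A j u| * |Cc j u| := by
        rw [Real.norm_eq_abs, abs_mul, abs_mul]
      rw [he]
      have hstep : |ψ₂ u * φ j₂ u| * |A j u| * |Cc j u|
          ≤ |ψ₂ u * φ j₂ u| * B₁ j * B₃ j := by
        have h3 : |ψ₂ u * φ j₂ u| * |A j u| ≤ |ψ₂ u * φ j₂ u| * B₁ j :=
          mul_le_mul_of_nonneg_left h1 (abs_nonneg _)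
        have h4 : |ψ₂ u * φ j₂ u| * |A j u| * |Cc j u| ≤ |ψ₂ u * φ j₂ u| * B₁ j * B₃ j :=
          mul_le_mul h3 h2 (abs_nonneg _) (mul_nonneg (abs_nonneg _) hB₁0)
        linarith
      calc |ψ₂ u * φ j₂ u| * |A j u| * |Cc j u| ≤ |ψ₂ u * φ j₂ u| * B₁ j * B₃ j := hstep
        _ = B₁ j * B₃ j * |ψ₂ u * φ j₂ u| := by ring
  -- per-j identity via Fubini
  have hhInt : ∀ j, IntegrableOn (fun u => ψ₂ u * φ j₂ u * A j u) (Set.Ioc t T) volume := by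
    intro j
    have hint : Integrable (fun u => ψ₂ u * φ j₂ u * A j u) μ := by
      refine Integrable.mono' (hφ₂int.abs.const_mul (B₁ j)) ?_ ?_
      · exact (hψ₂m.mul (hφ_mem j₂).1).mul
          ((hAcont j).aestronglyMeasurable measurableSet_Icc)
      · filter_upwards [hae] with u hu
        have h1 := hAbd j u hu
        have he : ‖ψ₂ u * φ j₂ u * A j u‖ = |ψ₂ u * φ j₂ u| * |A j u| := by
          rw [Real.norm_eq_abs, abs_mul]
        rw [he]
        calc |ψ₂ u * φ j₂ u| * |A j u| ≤ |ψ₂ u * φ j₂ u| * B₁ j :=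
              mul_le_mul_of_nonneg_left h1 (abs_nonneg _)
          _ = B₁ j * |ψ₂ u * φ j₂ u| := by ring
    rw [hμdef, ← Measure.restrict_congr_set Ioc_ae_eq_Icc] at hint
    exact hint
  have hgIntIoc : ∀ j, IntegrableOn (fun s => ψ₃ s * φ j s) (Set.Ioc t T) volume :=
    fun j => (h3Int j).mono_set Set.Ioc_subset_Icc_self
  have hid : ∀ j, C j j₂ j = ∫ u, ψ₂ u * φ j₂ u * A j u * Cc j u ∂μ := by
    intro j
    have key := Stmt5Aux.swap_triangle (g := fun s => ψ₃ s * φ j s)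
      (h := fun u => ψ₂ u * φ j₂ u * ∫ s in t..u, ψ₁ s * φ j s) hTt (hgIntIoc j) (hhInt j)
    rw [hC]
    simp only [hA, hCc]
    rw [hμdef, ← Measure.restrict_congr_set Ioc_ae_eq_Icc]
    exact key
  -- sum identity
  have hsum_eq : ∀ p, (∑ j ∈ Finset.range (p + 1), C j j₂ j)
      = ∫ u, ψ₂ u * φ j₂ u * ∑ j ∈ Finset.range (p + 1), A j u * Cc j u ∂μ := by
    intro p
    calc (∑ j ∈ Finset.range (p + 1), C j j₂ j)
        = ∑ j ∈ Finset.range (p + 1), ∫ u, ψ₂ u * φ j₂ u * A j u * Cc j u ∂μ :=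
          Finset.sum_congr rfl fun j _ => hid j
      _ = ∫ u, ∑ j ∈ Finset.range (p + 1), ψ₂ u * φ j₂ u * A j u * Cc j u ∂μ :=
          (integral_finset_sum _ fun j _ => hterm j).symm
      _ = _ := by
          refine integral_congr_ae (Eventually.of_forall fun u => ?_)
          simp only [Finset.mul_sum]
          exact Finset.sum_congr rfl fun j _ => by ring
  -- dominated convergence
  have hmain : Tendsto
      (fun p => ∫ u, ψ₂ u * φ j₂ u * ∑ j ∈ Finset.range (p + 1), A j u * Cc j u ∂μ)
      atTop (nhds 0) := by
    have h0 : (∫ _, (0 : ℝ) ∂μ) = 0 := integral_zero _ _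
    rw [← h0]
    refine tendsto_integral_of_dominated_convergence (fun u => K₂ * Mc * |φ j₂ u|)
      ?_ ?_ ?_ ?_
    · intro p
      refine (hψ₂m.mul (hφ_mem j₂).1).mul ?_
      refine Finset.aestronglyMeasurable_fun_sum _ fun j _ => ?_
      exact ((hAcont j).mul (hCccont j)).aestronglyMeasurable measurableSet_Icc
    · exact (((hφ_mem j₂).integrable one_le_two).abs.const_mul (K₂ * Mc))
    · intro p
      filter_upwards [hae] with u hu
      have h1 : |ψ₂ u| ≤ K₂ := by
        have := hK₂ u hu; rwa [Real.norm_eq_abs] at this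
      have h2 := hSbd u hu p
      have he : ‖ψ₂ u * φ j₂ u * ∑ j ∈ Finset.range (p + 1), A j u * Cc j u‖
          = |ψ₂ u| * |φ j₂ u| * |∑ j ∈ Finset.range (p + 1), A j u * Cc j u| := by
        rw [Real.norm_eq_abs, abs_mul, abs_mul]
      rw [he]
      have h3 : |ψ₂ u| * |φ j₂ u| ≤ K₂ * |φ j₂ u| :=
        mul_le_mul_of_nonneg_right h1 (abs_nonneg _)
      have hstep : |ψ₂ u| * |φ j₂ u| * |∑ j ∈ Finset.range (p + 1), A j u * Cc j u|
          ≤ K₂ * |φ j₂ u| * Mc :=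
        mul_le_mul h3 h2 (abs_nonneg _) (mul_nonneg hK₂0 (abs_nonneg _))
      calc |ψ₂ u| * |φ j₂ u| * |∑ j ∈ Finset.range (p + 1), A j u * Cc j u|
          ≤ K₂ * |φ j₂ u| * Mc := hstep
        _ = K₂ * Mc * |φ j₂ u| := by ring
    · filter_upwards [hae] with u hu
      simpa using (hS0 u hu).const_mul (ψ₂ u * φ j₂ u)
  exact Tendsto.congr (fun p => (hsum_eq p).symm) hmain
end

section
/- Let 0 ≤ t < T, let {φ_j}_{j=0}^∞ be an arbitrary complete orthonormal system of L²([t,T],ℝ), and let ψ_i(τ) = (τ − t)^{l_i} with l_i ∈ ℕ ∪ {0} for i = 1, 2, 3. Then lim_{p→∞} Σ_{j₃=0}^p ( Σ_{j₁=0}^p C_{j₃ j₁ j₁} − (1/2) ∫_t^T ψ₃(s)φ_{j₃}(s) (∫_t^s ψ₁(u)ψ₂(u) du) ds )² = 0, and lim_{p→∞} Σ_{j₁=0}^p ( Σ_{j=0}^p C_{j j j₁} − (1/2) ∫_t^T ψ₃(s)ψ₂(s) (∫_t^s ψ₁(u)φ_{j₁}(u) du) ds )² = 0. -/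
open MeasureTheory Filter Finset

lemma swapF {f g : ℝ → ℝ} {c d : ℝ} (hcd : c ≤ d)
    (hf : IntegrableOn f (Set.Ioc c d))
    (hg : IntegrableOn g (Set.Ioc c d)) :
    ∫ y in c..d, g y * ∫ x in c..y, f x = ∫ x in c..d, f x * ∫ y in x..d, g y := by
  set ν := volume.restrict (Set.Ioc c d) with hν
  set F : ℝ × ℝ → ℝ := {p : ℝ × ℝ | p.1 ≤ p.2}.indicator (fun p => f p.1 * g p.2) with hF
  have hmeas : MeasurableSet {p : ℝ × ℝ | p.1 ≤ p.2} :=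
    measurableSet_le measurable_fst measurable_snd
  have hint : Integrable F (ν.prod ν) := (Integrable.mul_prod hf hg).indicator hmeas
  have swap : ∫ x, (∫ y, F (x, y) ∂ν) ∂ν = ∫ y, (∫ x, F (x, y) ∂ν) ∂ν :=
    integral_integral_swap hint
  have hL : ∫ x, (∫ y, F (x, y) ∂ν) ∂ν = ∫ x in c..d, f x * ∫ y in x..d, g y := by
    rw [intervalIntegral.integral_of_le hcd]
    refine setIntegral_congr_fun measurableSet_Ioc (fun x hx => ?_)
    have h1 : ∀ y, F (x, y) = (Set.Ici x).indicator (fun y => f x * g y) y := by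
      intro y
      by_cases h : x ≤ y <;>
        simp [hF, Set.indicator_apply, Set.mem_setOf_eq, Set.mem_Ici, h]
    simp only [h1]
    rw [integral_indicator measurableSet_Ici, Measure.restrict_restrict measurableSet_Ici]
    have h2 : Set.Ici x ∩ Set.Ioc c d = Set.Icc x d := by
      ext z
      simp only [Set.mem_inter_iff, Set.mem_Ici, Set.mem_Ioc, Set.mem_Icc]
      constructor
      · rintro ⟨h1', h2', h3'⟩; exact ⟨h1', h3'⟩
      · rintro ⟨h1', h2'⟩; exact ⟨h1', lt_of_lt_of_le hx.1 h1', h2'⟩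
    rw [h2, integral_Icc_eq_integral_Ioc, integral_const_mul,
      ← intervalIntegral.integral_of_le hx.2]
  have hR : ∫ y, (∫ x, F (x, y) ∂ν) ∂ν = ∫ y in c..d, g y * ∫ x in c..y, f x := by
    rw [intervalIntegral.integral_of_le hcd]
    refine (setIntegral_congr_fun measurableSet_Ioc (fun y hy => ?_))
    have h1 : ∀ x, F (x, y) = (Set.Iic y).indicator (fun x => f x * g y) x := by
      intro x
      by_cases h : x ≤ y <;>
        simp [hF, Set.indicator_apply, Set.mem_setOf_eq, Set.mem_Iic, h]
    simp only [h1]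
    rw [integral_indicator measurableSet_Iic, Measure.restrict_restrict measurableSet_Iic]
    have h2 : Set.Iic y ∩ Set.Ioc c d = Set.Ioc c y := by
      ext z
      simp only [Set.mem_inter_iff, Set.mem_Iic, Set.mem_Ioc]
      constructor
      · rintro ⟨h1', h2', h3'⟩; exact ⟨h2', h1'⟩
      · rintro ⟨h1', h2'⟩; exact ⟨h2', h1', h2'.trans hy.2⟩
    rw [h2, integral_mul_const, ← intervalIntegral.integral_of_le (le_of_lt hy.1)]
    ring
  rw [← hR, ← swap, hL]

local notation "⟪" x ", " y "⟫" => @inner ℝ _ _ x y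

section hilbert

variable {t T : ℝ}

lemma finmeas (t T : ℝ) : IsFiniteMeasure (volume.restrict (Set.Icc t T)) := by
  constructor
  rw [Measure.restrict_apply_univ]
  exact (isCompact_Icc).measure_lt_top

lemma L2inner {μ : Measure ℝ} {f g : ℝ → ℝ}
    (hf : MemLp f 2 μ) (hg : MemLp g 2 μ) :
    ⟪hf.toLp f, hg.toLp g⟫ = ∫ x, f x * g x ∂μ := by
  rw [L2.inner_def]
  refine integral_congr_ae ?_
  filter_upwards [hf.coeFn_toLp, hg.coeFn_toLp] with x h1 h2
  simp [h1, h2, RCLike.inner_apply, conj_trivial]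
  ring

variable (φ : ℕ → ℝ → ℝ)
    (hφ_mem : ∀ j, MemLp (φ j) 2 (volume.restrict (Set.Icc t T)))
    (hφ_on : ∀ i j, (∫ x in Set.Icc t T, φ i x * φ j x) = if i = j then (1 : ℝ) else 0)
    (hφ_complete : ∀ f : ℝ → ℝ, MemLp f 2 (volume.restrict (Set.Icc t T)) →
      (∀ j, (∫ x in Set.Icc t T, f x * φ j x) = 0) →
      f =ᵐ[volume.restrict (Set.Icc t T)] 0)

include hφ_mem hφ_on in
lemma orthonormal_e :
    Orthonormal ℝ (fun j => (hφ_mem j).toLp (φ j)) := by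
  rw [orthonormal_iff_ite]
  intro i j
  rw [L2inner (hφ_mem i) (hφ_mem j)]
  simpa using hφ_on i j

include hφ_mem hφ_on hφ_complete in
lemma exists_basis :
    ∃ b : HilbertBasis ℕ ℝ (Lp ℝ 2 (volume.restrict (Set.Icc t T))),
      ∀ j, b j = (hφ_mem j).toLp (φ j) := by
  haveI := finmeas t T
  set e : ℕ → Lp ℝ 2 (volume.restrict (Set.Icc t T)) := fun j => (hφ_mem j).toLp (φ j) with he
  have hon : Orthonormal ℝ e := orthonormal_e φ hφ_mem hφ_on
  have hsp : (Submodule.span ℝ (Set.range e))ᗮ = ⊥ := by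
    rw [Submodule.eq_bot_iff]
    intro x hx
    have hx' : ∀ j, ⟪e j, x⟫ = 0 := by
      intro j
      exact (Submodule.mem_orthogonal _ x).mp hx (e j) (Submodule.subset_span ⟨j, rfl⟩)
    have hxm : MemLp (⇑x) 2 (volume.restrict (Set.Icc t T)) := Lp.memLp x
    have h0 : ∀ j, (∫ s in Set.Icc t T, x s * φ j s) = 0 := by
      intro j
      have h1 : ⟪e j, hxm.toLp ⇑x⟫ = 0 := by
        rw [Lp.toLp_coeFn x hxm]; exact hx' j
      rw [he, L2inner (hφ_mem j) hxm] at h1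
      rw [← h1]
      exact integral_congr_ae (Eventually.of_forall fun s => mul_comm _ _)
    have := hφ_complete (⇑x) hxm h0
    exact Lp.ext (this.trans (Lp.coeFn_zero ℝ 2 _).symm)
  exact ⟨HilbertBasis.mkOfOrthogonalEqBot hon hsp,
    fun j => congrFun (HilbertBasis.coe_mkOfOrthogonalEqBot hon hsp) j⟩

include hφ_mem hφ_on hφ_complete in
lemma pair_parseval {f g : ℝ → ℝ}
    (hf : MemLp f 2 (volume.restrict (Set.Icc t T)))
    (hg : MemLp g 2 (volume.restrict (Set.Icc t T))) :
    Tendsto (fun p => ∑ j ∈ Finset.range p,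
        (∫ x in Set.Icc t T, f x * φ j x) * (∫ x in Set.Icc t T, g x * φ j x))
      atTop (nhds (∫ x in Set.Icc t T, f x * g x)) := by
  obtain ⟨b, hb⟩ := exists_basis φ hφ_mem hφ_on hφ_complete
  have hs := b.hasSum_inner_mul_inner (hf.toLp f) (hg.toLp g)
  have h1 : ∀ j, ⟪hf.toLp f, b j⟫ * ⟪b j, hg.toLp g⟫
      = (∫ x in Set.Icc t T, f x * φ j x) * (∫ x in Set.Icc t T, g x * φ j x) := by
    intro j
    rw [hb j, L2inner hf (hφ_mem j), ← inner_conj_symm, L2inner hg (hφ_mem j)]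
    simp [conj_trivial]
  rw [L2inner hf hg] at hs
  simp only [h1] at hs
  exact hs.tendsto_sum_nat

include hφ_mem hφ_on in
lemma bessel {f : ℝ → ℝ}
    (hf : MemLp f 2 (volume.restrict (Set.Icc t T))) (s : Finset ℕ) :
    ∑ j ∈ s, (∫ x in Set.Icc t T, f x * φ j x) ^ 2 ≤ ∫ x in Set.Icc t T, f x * f x := by
  have hon := orthonormal_e φ hφ_mem hφ_on
  have h := hon.sum_inner_products_le (hf.toLp f) (s := s)
  have h1 : ∀ j, ‖⟪(hφ_mem j).toLp (φ j), hf.toLp f⟫‖ ^ 2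
      = (∫ x in Set.Icc t T, f x * φ j x) ^ 2 := by
    intro j
    rw [L2inner (hφ_mem j) hf]
    rw [Real.norm_eq_abs, sq_abs]
    congr 1
    exact integral_congr_ae (Eventually.of_forall fun s => mul_comm _ _)
  simp only [h1] at h
  calc ∑ j ∈ s, (∫ x in Set.Icc t T, f x * φ j x) ^ 2 ≤ ‖hf.toLp f‖ ^ 2 := h
    _ = ∫ x in Set.Icc t T, f x * f x := by
        rw [← real_inner_self_eq_norm_sq, L2inner hf hf]

include hφ_mem hφ_on in
lemma cs_bound {f g : ℝ → ℝ}
    (hf : MemLp f 2 (volume.restrict (Set.Icc t T)))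
    (hg : MemLp g 2 (volume.restrict (Set.Icc t T))) (s : Finset ℕ) :
    |∑ j ∈ s, (∫ x in Set.Icc t T, f x * φ j x) * (∫ x in Set.Icc t T, g x * φ j x)|
      ≤ Real.sqrt (∫ x in Set.Icc t T, f x * f x) *
        Real.sqrt (∫ x in Set.Icc t T, g x * g x) := by
  have hcs := Finset.sum_mul_sq_le_sq_mul_sq s
    (fun j => ∫ x in Set.Icc t T, f x * φ j x) (fun j => ∫ x in Set.Icc t T, g x * φ j x)
  have h1 := bessel φ hφ_mem hφ_on hf s
  have h2 := bessel φ hφ_mem hφ_on hg s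
  have hnn1 : (0:ℝ) ≤ ∑ j ∈ s, (∫ x in Set.Icc t T, f x * φ j x) ^ 2 :=
    Finset.sum_nonneg fun j _ => sq_nonneg _
  have hnn2 : (0:ℝ) ≤ ∑ j ∈ s, (∫ x in Set.Icc t T, g x * φ j x) ^ 2 :=
    Finset.sum_nonneg fun j _ => sq_nonneg _
  calc |∑ j ∈ s, (∫ x in Set.Icc t T, f x * φ j x) * (∫ x in Set.Icc t T, g x * φ j x)|
      = Real.sqrt ((∑ j ∈ s, (∫ x in Set.Icc t T, f x * φ j x) *
          (∫ x in Set.Icc t T, g x * φ j x)) ^ 2) := (Real.sqrt_sq_eq_abs _).symm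
    _ ≤ Real.sqrt ((∑ j ∈ s, (∫ x in Set.Icc t T, f x * φ j x) ^ 2) *
          ∑ j ∈ s, (∫ x in Set.Icc t T, g x * φ j x) ^ 2) := Real.sqrt_le_sqrt hcs
    _ = Real.sqrt (∑ j ∈ s, (∫ x in Set.Icc t T, f x * φ j x) ^ 2) *
          Real.sqrt (∑ j ∈ s, (∫ x in Set.Icc t T, g x * φ j x) ^ 2) := Real.sqrt_mul hnn1 _
    _ ≤ Real.sqrt (∫ x in Set.Icc t T, f x * f x) *
          Real.sqrt (∫ x in Set.Icc t T, g x * g x) := by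
        exact mul_le_mul (Real.sqrt_le_sqrt h1) (Real.sqrt_le_sqrt h2)
          (Real.sqrt_nonneg _) (Real.sqrt_nonneg _)

end hilbert

section toolkit

noncomputable def Phi (t T : ℝ) (φ : ℕ → ℝ → ℝ) (j : ℕ) : ℝ → ℝ :=
  (Set.Icc t T).indicator (φ j)

noncomputable def gind (t : ℝ) (n : ℕ) (c d : ℝ) : ℝ → ℝ :=
  (Set.Icc c d).indicator (fun x => (x - t) ^ n)

variable {t T : ℝ} (φ : ℕ → ℝ → ℝ)
    (hφ_mem : ∀ j, MemLp (φ j) 2 (volume.restrict (Set.Icc t T)))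

include hφ_mem in
lemma Phi_int (j : ℕ) : Integrable (Phi t T φ j) volume := by
  haveI := finmeas t T
  exact MeasureTheory.IntegrableOn.integrable_indicator ((hφ_mem j).integrable one_le_two)
    measurableSet_Icc

lemma Phi_eq {x : ℝ} (hx : x ∈ Set.Icc t T) (j : ℕ) : Phi t T φ j x = φ j x :=
  Set.indicator_of_mem hx _

include hφ_mem in
lemma powPhi_int (n : ℕ) (j : ℕ) (a b : ℝ) :
    IntervalIntegrable (fun x => (x - t) ^ n * Phi t T φ j x) volume a b :=
  ((Phi_int φ hφ_mem j).intervalIntegrable).continuousOn_mul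
    (((continuous_id.sub continuous_const).pow n).continuousOn)

include hφ_mem in
lemma powPhi_prim_cont (n : ℕ) (j : ℕ) (c : ℝ) :
    Continuous (fun r => ∫ x in c..r, (x - t) ^ n * Phi t T φ j x) :=
  intervalIntegral.continuous_primitive (powPhi_int φ hφ_mem n j) c

lemma gind_phi (n : ℕ) (j : ℕ) {c d : ℝ} (htc : t ≤ c) (hcd : c ≤ d) (hdT : d ≤ T) :
    ∫ x in Set.Icc t T, gind t n c d x * φ j x
      = ∫ x in c..d, (x - t) ^ n * Phi t T φ j x := by
  have h1 : ∀ x, gind t n c d x * φ j x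
      = (Set.Icc c d).indicator (fun x => (x - t) ^ n * φ j x) x := by
    intro x
    by_cases h : x ∈ Set.Icc c d <;> simp [gind, Set.indicator_apply, h]
  simp only [h1]
  rw [integral_indicator measurableSet_Icc, Measure.restrict_restrict measurableSet_Icc,
    Set.inter_eq_left.mpr (Set.Icc_subset_Icc htc hdT),
    integral_Icc_eq_integral_Ioc, intervalIntegral.integral_of_le hcd]
  refine setIntegral_congr_fun measurableSet_Ioc (fun x hx => ?_)
  have hmem : x ∈ Set.Icc t T := ⟨htc.trans (le_of_lt hx.1), hx.2.trans hdT⟩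
  simp [Phi, Set.indicator_of_mem hmem]

lemma gind_gind (n m : ℕ) {c d : ℝ} (htc : t ≤ c) (hcd : c ≤ d) (hdT : d ≤ T) :
    ∫ x in Set.Icc t T, gind t n c d x * gind t m c d x
      = ∫ y in c..d, (y - t) ^ (n + m) := by
  have h1 : ∀ x, gind t n c d x * gind t m c d x
      = (Set.Icc c d).indicator (fun x => (x - t) ^ (n + m)) x := by
    intro x
    by_cases h : x ∈ Set.Icc c d <;> simp [gind, Set.indicator_apply, h, pow_add]
  simp only [h1]
  rw [integral_indicator measurableSet_Icc, Measure.restrict_restrict measurableSet_Icc,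
    Set.inter_eq_left.mpr (Set.Icc_subset_Icc htc hdT),
    integral_Icc_eq_integral_Ioc, intervalIntegral.integral_of_le hcd]

lemma gind_disjoint (n m : ℕ) {c r d : ℝ} (hcr : c ≤ r) (hrd : r ≤ d) :
    ∫ x in Set.Icc t T, gind t n c r x * gind t m r d x = 0 := by
  have h1 : ∀ x, gind t n c r x * gind t m r d x
      = ({r} : Set ℝ).indicator (fun x => (x - t) ^ (n + m)) x := by
    intro x
    have : Set.Icc c r ∩ Set.Icc r d = {r} := by
      rw [Set.Icc_inter_Icc, max_eq_right hcr, min_eq_left hrd, Set.Icc_self]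
    by_cases h : x = r
    · subst h
      simp [gind, Set.indicator_apply, Set.mem_Icc, hcr, hrd, le_refl, pow_add]
    · have hx : x ∉ Set.Icc c r ∨ x ∉ Set.Icc r d := by
        by_contra hc
        push_neg at hc
        have hmem : x ∈ Set.Icc c r ∩ Set.Icc r d := ⟨hc.1, hc.2⟩
        rw [this] at hmem
        exact h (Set.mem_singleton_iff.mp hmem)
      rcases hx with hx | hx <;> simp [gind, Set.indicator_apply, hx, h]
  simp only [h1]
  rw [integral_indicator (measurableSet_singleton r)]
  have : (volume.restrict (Set.Icc t T)).restrict {r} = 0 := by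
    rw [Measure.restrict_restrict (measurableSet_singleton r)]
    refine Measure.restrict_eq_zero.mpr ?_
    exact measure_mono_null Set.inter_subset_left (Real.volume_singleton)
  rw [this, integral_zero_measure]

lemma gind_memL2 (n : ℕ) (c d : ℝ) :
    MemLp (gind t n c d) 2 (volume.restrict (Set.Icc t T)) := by
  haveI := finmeas t T
  have hm : AEStronglyMeasurable (gind t n c d) (volume.restrict (Set.Icc t T)) :=
    (((measurable_id.sub_const t).pow_const n).indicator measurableSet_Icc).aestronglyMeasurable
  refine MemLp.of_bound hm (max |c - t| |d - t| ^ n) ?_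
  refine Eventually.of_forall (fun x => ?_)
  by_cases h : x ∈ Set.Icc c d
  · rw [gind, Set.indicator_of_mem h]
    rw [Real.norm_eq_abs, abs_pow]
    refine pow_le_pow_left₀ (abs_nonneg _) ?_ n
    rw [abs_le]
    constructor
    · have := h.1
      have h2 : -(max |c - t| |d - t|) ≤ c - t := by
        have : |c - t| ≤ max |c - t| |d - t| := le_max_left _ _
        have h3 := neg_abs_le (c - t)
        linarith
      linarith
    · have := h.2
      have h2 : d - t ≤ max |c - t| |d - t| := (le_abs_self _).trans (le_max_right _ _)
      linarith
  · rw [gind, Set.indicator_of_notMem h, norm_zero]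
    positivity

lemma gind_self_le (n : ℕ) {c d : ℝ} (htc : t ≤ c) (hdT : d ≤ T) :
    ∫ x in Set.Icc t T, gind t n c d x * gind t n c d x
      ≤ ∫ x in Set.Icc t T, ((x - t) ^ n) ^ 2 := by
  haveI := finmeas t T
  refine setIntegral_mono_on ?_ ?_ measurableSet_Icc ?_
  · have h1 : ∀ x, gind t n c d x * gind t n c d x
        = (Set.Icc c d).indicator (fun x => ((x - t) ^ n) ^ 2) x := by
      intro x
      by_cases h : x ∈ Set.Icc c d <;> simp [gind, Set.indicator_apply, h, sq]
    simp only [h1]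
    exact ((((continuous_id.sub continuous_const).pow n).pow 2).integrableOn_Icc).integrable_indicator
      measurableSet_Icc
  · exact (((continuous_id.sub continuous_const).pow n).pow 2).integrableOn_Icc
  · intro x _
    by_cases h : x ∈ Set.Icc c d
    · simp [gind, Set.indicator_of_mem h, sq, le_refl]
    · simp only [gind, Set.indicator_of_notMem h, mul_zero]
      positivity

end toolkit

section core

noncomputable def Sfun (t T : ℝ) (φ : ℕ → ℝ → ℝ) (n m j : ℕ) (c d : ℝ) : ℝ :=
  ∫ y in c..d, (y - t) ^ m * Phi t T φ j y * ∫ x in c..y, (x - t) ^ n * Phi t T φ j x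

lemma alg_pow (t x y : ℝ) {n m : ℕ} (hnm : n ≤ m) :
    (y - t) ^ m * (x - t) ^ n - (y - t) ^ n * (x - t) ^ m
      = ∑ k ∈ Finset.range (m - n),
          (y - x) * ((x - t) ^ (n + (m - n - 1 - k)) * (y - t) ^ (n + k)) := by
  set X := x - t with hX
  set Y := y - t with hY
  have h1 : (∑ i ∈ Finset.range (m - n), Y ^ i * X ^ (m - n - 1 - i)) * (Y - X)
      = Y ^ (m - n) - X ^ (m - n) := geom_sum₂_mul Y X (m - n)
  have h2 : Y ^ m = Y ^ n * Y ^ (m - n) := by rw [← pow_add, Nat.add_sub_cancel' hnm]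
  have h3 : X ^ m = X ^ n * X ^ (m - n) := by rw [← pow_add, Nat.add_sub_cancel' hnm]
  have h4 : Y - X = y - x := by rw [hX, hY]; ring
  calc Y ^ m * X ^ n - Y ^ n * X ^ m
      = X ^ n * Y ^ n * (Y ^ (m - n) - X ^ (m - n)) := by rw [h2, h3]; ring
    _ = X ^ n * Y ^ n * ((∑ i ∈ Finset.range (m - n), Y ^ i * X ^ (m - n - 1 - i)) * (Y - X)) := by
        rw [h1]
    _ = ∑ k ∈ Finset.range (m - n), (y - x) * (X ^ (n + (m - n - 1 - k)) * Y ^ (n + k)) := by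
        rw [Finset.sum_mul, Finset.mul_sum]
        refine Finset.sum_congr rfl fun k hk => ?_
        rw [pow_add, pow_add, ← h4]
        ring

variable {t T : ℝ} (φ : ℕ → ℝ → ℝ)
    (hφ_mem : ∀ j, MemLp (φ j) 2 (volume.restrict (Set.Icc t T)))

include hφ_mem in
lemma Sfun_add (n m j : ℕ) {c d : ℝ} (hcd : c ≤ d) :
    Sfun t T φ n m j c d + Sfun t T φ m n j c d
      = (∫ x in c..d, (x - t) ^ n * Phi t T φ j x) *
        (∫ x in c..d, (x - t) ^ m * Phi t T φ j x) := by
  have hfi := powPhi_int φ hφ_mem n j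
  have hgi := powPhi_int φ hφ_mem m j
  have hs := swapF hcd (f := fun x => (x - t) ^ n * Phi t T φ j x)
    (g := fun y => (y - t) ^ m * Phi t T φ j y) ((hfi c d).1) ((hgi c d).1)
  have h2 : ∫ x in c..d, (fun x => (x - t) ^ n * Phi t T φ j x) x *
        ∫ y in x..d, (fun y => (y - t) ^ m * Phi t T φ j y) y
      = (∫ x in c..d, (x - t) ^ n * Phi t T φ j x) *
          (∫ x in c..d, (x - t) ^ m * Phi t T φ j x)
        - Sfun t T φ m n j c d := by
    have h3 : ∀ y ∈ Set.uIcc c d,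
        (y - t) ^ n * Phi t T φ j y * (∫ s in y..d, (s - t) ^ m * Phi t T φ j s)
        = (y - t) ^ n * Phi t T φ j y * (∫ s in c..d, (s - t) ^ m * Phi t T φ j s)
          - (y - t) ^ n * Phi t T φ j y * (∫ s in c..y, (s - t) ^ m * Phi t T φ j s) := by
      intro y _
      rw [← mul_sub]
      congr 1
      rw [intervalIntegral.integral_interval_sub_left (hgi c d) (hgi c y)]
    rw [intervalIntegral.integral_congr h3, intervalIntegral.integral_sub, Sfun]
    · congr 1
      rw [intervalIntegral.integral_mul_const]
    · exact (hfi c d).mul_const _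
    · exact (hfi c d).mul_continuousOn (powPhi_prim_cont φ hφ_mem m j c).continuousOn
  rw [Sfun, hs, h2]
  ring

include hφ_mem in
lemma inner_tri (a j : ℕ) {c y : ℝ} (hcy : c ≤ y) :
    ∫ x in c..y, (y - x) * ((x - t) ^ a * Phi t T φ j x)
      = ∫ r in c..y, (∫ x in c..r, (x - t) ^ a * Phi t T φ j x) := by
  have hfi := powPhi_int φ hφ_mem a j
  have hs := swapF hcy (f := fun x => (x - t) ^ a * Phi t T φ j x)
    (g := fun _ => (1 : ℝ)) ((hfi c y).1) (integrableOn_const measure_Ioc_lt_top.ne)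
  simp only [one_mul] at hs
  rw [hs]
  refine intervalIntegral.integral_congr fun x hx => ?_
  simp only [intervalIntegral.integral_const, smul_eq_mul, mul_one]
  ring

include hφ_mem in
lemma Sfun_sub {n m : ℕ} (hnm : n ≤ m) (j : ℕ) {c d : ℝ} (hcd : c ≤ d) :
    Sfun t T φ n m j c d - Sfun t T φ m n j c d
      = ∑ k ∈ Finset.range (m - n), ∫ r in c..d,
          (∫ x in c..r, (x - t) ^ (n + (m - n - 1 - k)) * Phi t T φ j x) *
          (∫ y in r..d, (y - t) ^ (n + k) * Phi t T φ j y) := by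
  have hpi : ∀ (a : ℕ) (u v : ℝ),
      IntervalIntegrable (fun x => (x - t) ^ a * Phi t T φ j x) volume u v :=
    fun a u v => powPhi_int φ hφ_mem a j u v
  have hprim : ∀ (a : ℕ), Continuous fun r => ∫ x in c..r, (x - t) ^ a * Phi t T φ j x :=
    fun a => powPhi_prim_cont φ hφ_mem a j c
  have key_y : ∀ y, c ≤ y →
      (y - t) ^ m * Phi t T φ j y * (∫ x in c..y, (x - t) ^ n * Phi t T φ j x)
        - (y - t) ^ n * Phi t T φ j y * (∫ x in c..y, (x - t) ^ m * Phi t T φ j x)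
      = ∑ k ∈ Finset.range (m - n), ((y - t) ^ (n + k) * Phi t T φ j y) *
          ∫ r in c..y, (∫ x in c..r, (x - t) ^ (n + (m - n - 1 - k)) * Phi t T φ j x) := by
    intro y hcy
    have e2 : (y - t) ^ m * (∫ x in c..y, (x - t) ^ n * Phi t T φ j x)
          - (y - t) ^ n * (∫ x in c..y, (x - t) ^ m * Phi t T φ j x)
        = ∫ x in c..y, ((y - t) ^ m * ((x - t) ^ n * Phi t T φ j x)
            - (y - t) ^ n * ((x - t) ^ m * Phi t T φ j x)) := by
      rw [intervalIntegral.integral_sub ((hpi n c y).const_mul _) ((hpi m c y).const_mul _),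
        intervalIntegral.integral_const_mul, intervalIntegral.integral_const_mul]
    have e3 : ∀ x : ℝ, (y - t) ^ m * ((x - t) ^ n * Phi t T φ j x)
          - (y - t) ^ n * ((x - t) ^ m * Phi t T φ j x)
        = ∑ k ∈ Finset.range (m - n),
            (y - t) ^ (n + k) * ((y - x) * ((x - t) ^ (n + (m - n - 1 - k)) * Phi t T φ j x)) := by
      intro x
      calc (y - t) ^ m * ((x - t) ^ n * Phi t T φ j x)
            - (y - t) ^ n * ((x - t) ^ m * Phi t T φ j x)
          = ((y - t) ^ m * (x - t) ^ n - (y - t) ^ n * (x - t) ^ m) * Phi t T φ j x := by ring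
        _ = (∑ k ∈ Finset.range (m - n),
              (y - x) * ((x - t) ^ (n + (m - n - 1 - k)) * (y - t) ^ (n + k))) * Phi t T φ j x := by
            rw [alg_pow t x y hnm]
        _ = _ := by
            rw [Finset.sum_mul]
            exact Finset.sum_congr rfl fun k _ => by ring
    have e4 : ∫ x in c..y, ((y - t) ^ m * ((x - t) ^ n * Phi t T φ j x)
          - (y - t) ^ n * ((x - t) ^ m * Phi t T φ j x))
        = ∑ k ∈ Finset.range (m - n), (y - t) ^ (n + k) *
            ∫ r in c..y, (∫ x in c..r, (x - t) ^ (n + (m - n - 1 - k)) * Phi t T φ j x) := by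
      rw [intervalIntegral.integral_congr (fun x _ => e3 x),
        intervalIntegral.integral_finset_sum]
      · refine Finset.sum_congr rfl fun k _ => ?_
        rw [intervalIntegral.integral_const_mul, inner_tri φ hφ_mem _ j hcy]
      · intro k _
        exact ((hpi (n + (m - n - 1 - k)) c y).continuousOn_mul
          ((continuous_const.sub continuous_id).continuousOn)).const_mul _
    calc (y - t) ^ m * Phi t T φ j y * (∫ x in c..y, (x - t) ^ n * Phi t T φ j x)
          - (y - t) ^ n * Phi t T φ j y * (∫ x in c..y, (x - t) ^ m * Phi t T φ j x)
        = Phi t T φ j y * ((y - t) ^ m * (∫ x in c..y, (x - t) ^ n * Phi t T φ j x)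
            - (y - t) ^ n * (∫ x in c..y, (x - t) ^ m * Phi t T φ j x)) := by ring
      _ = Phi t T φ j y * ∑ k ∈ Finset.range (m - n), (y - t) ^ (n + k) *
            ∫ r in c..y, (∫ x in c..r, (x - t) ^ (n + (m - n - 1 - k)) * Phi t T φ j x) := by
          rw [e2, e4]
      _ = _ := by
          rw [Finset.mul_sum]
          exact Finset.sum_congr rfl fun k _ => by ring
  have main : Sfun t T φ n m j c d - Sfun t T φ m n j c d
      = ∫ y in c..d, ∑ k ∈ Finset.range (m - n), ((y - t) ^ (n + k) * Phi t T φ j y) *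
          ∫ r in c..y, (∫ x in c..r, (x - t) ^ (n + (m - n - 1 - k)) * Phi t T φ j x) := by
    rw [Sfun, Sfun, ← intervalIntegral.integral_sub
      ((hpi m c d).mul_continuousOn (hprim n).continuousOn)
      ((hpi n c d).mul_continuousOn (hprim m).continuousOn)]
    refine intervalIntegral.integral_congr fun y hy => ?_
    rw [Set.uIcc_of_le hcd] at hy
    exact key_y y hy.1
  rw [main, intervalIntegral.integral_finset_sum]
  · refine Finset.sum_congr rfl fun k _ => ?_
    have hsw := swapF hcd (f := fun r => ∫ x in c..r, (x - t) ^ (n + (m - n - 1 - k)) * Phi t T φ j x)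
      (g := fun y => (y - t) ^ (n + k) * Phi t T φ j y)
      ((hprim (n + (m - n - 1 - k))).intervalIntegrable c d).1 ((hpi (n + k) c d).1)
    rw [← hsw]
  · intro k _
    exact (hpi (n + k) c d).mul_continuousOn
      (intervalIntegral.continuous_primitive
        (fun u v => (hprim (n + (m - n - 1 - k))).intervalIntegrable u v) c).continuousOn

end core

section limits

noncomputable def Kc (t T : ℝ) (a : ℕ) : ℝ :=
  Real.sqrt (∫ x in Set.Icc t T, ((x - t) ^ a) ^ 2)

variable {t T : ℝ} (φ : ℕ → ℝ → ℝ)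
    (hφ_mem : ∀ j, MemLp (φ j) 2 (volume.restrict (Set.Icc t T)))
    (hφ_on : ∀ i j, (∫ x in Set.Icc t T, φ i x * φ j x) = if i = j then (1 : ℝ) else 0)
    (hφ_complete : ∀ f : ℝ → ℝ, MemLp f 2 (volume.restrict (Set.Icc t T)) →
      (∀ j, (∫ x in Set.Icc t T, f x * φ j x) = 0) →
      f =ᵐ[volume.restrict (Set.Icc t T)] 0)

lemma Kc_nonneg (a : ℕ) : 0 ≤ Kc t T a := Real.sqrt_nonneg _

include hφ_mem hφ_on in
lemma pair_bound (a b : ℕ) (s : Finset ℕ) {c1 d1 c2 d2 : ℝ}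
    (h1 : t ≤ c1) (h2 : c1 ≤ d1) (h3 : d1 ≤ T)
    (h4 : t ≤ c2) (h5 : c2 ≤ d2) (h6 : d2 ≤ T) :
    |∑ j ∈ s, (∫ x in c1..d1, (x - t) ^ a * Phi t T φ j x) *
        (∫ y in c2..d2, (y - t) ^ b * Phi t T φ j y)|
      ≤ Kc t T a * Kc t T b := by
  have hconv : ∀ j : ℕ, (∫ x in c1..d1, (x - t) ^ a * Phi t T φ j x) *
        (∫ y in c2..d2, (y - t) ^ b * Phi t T φ j y)
      = (∫ x in Set.Icc t T, gind t a c1 d1 x * φ j x) *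
        (∫ x in Set.Icc t T, gind t b c2 d2 x * φ j x) := by
    intro j
    rw [gind_phi φ a j h1 h2 h3, gind_phi φ b j h4 h5 h6]
  simp only [hconv]
  refine (cs_bound φ hφ_mem hφ_on (gind_memL2 a c1 d1) (gind_memL2 b c2 d2) s).trans ?_
  refine mul_le_mul ?_ ?_ (Real.sqrt_nonneg _) (Real.sqrt_nonneg _)
  · exact Real.sqrt_le_sqrt (gind_self_le a h1 h3)
  · exact Real.sqrt_le_sqrt (gind_self_le b h4 h6)

include hφ_mem hφ_on hφ_complete in
lemma tendsto_sym (n m : ℕ) {c d : ℝ} (htc : t ≤ c) (hcd : c ≤ d) (hdT : d ≤ T) :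
    Tendsto (fun p => ∑ j ∈ Finset.range p, (Sfun t T φ n m j c d + Sfun t T φ m n j c d))
      atTop (nhds (∫ y in c..d, (y - t) ^ (n + m))) := by
  have hpp := pair_parseval φ hφ_mem hφ_on hφ_complete (gind_memL2 n c d) (gind_memL2 m c d)
  rw [gind_gind n m htc hcd hdT] at hpp
  refine hpp.congr fun p => Finset.sum_congr rfl fun j _ => ?_
  rw [Sfun_add φ hφ_mem n m j hcd, gind_phi φ n j htc hcd hdT, gind_phi φ m j htc hcd hdT]

include hφ_mem hφ_on hφ_complete in
lemma tendsto_diff {n m : ℕ} (hnm : n ≤ m) {c d : ℝ} (htc : t ≤ c) (hcd : c ≤ d) (hdT : d ≤ T) :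
    Tendsto (fun p => ∑ j ∈ Finset.range p, (Sfun t T φ n m j c d - Sfun t T φ m n j c d))
      atTop (nhds 0) := by
  have hrepr : ∀ p : ℕ, ∑ j ∈ Finset.range p, (Sfun t T φ n m j c d - Sfun t T φ m n j c d)
      = ∑ k ∈ Finset.range (m - n), ∫ r in c..d, ∑ j ∈ Finset.range p,
          (∫ x in c..r, (x - t) ^ (n + (m - n - 1 - k)) * Phi t T φ j x) *
          (∫ y in r..d, (y - t) ^ (n + k) * Phi t T φ j y) := by
    intro p
    rw [Finset.sum_congr rfl fun j _ => Sfun_sub φ hφ_mem hnm j hcd, Finset.sum_comm]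
    refine Finset.sum_congr rfl fun k _ => ?_
    rw [← intervalIntegral.integral_finset_sum]
    intro j _
    refine Continuous.intervalIntegrable ?_ c d
    refine (powPhi_prim_cont φ hφ_mem _ j c).mul ?_
    have hq : ∀ r : ℝ, ∫ y in r..d, (y - t) ^ (n + k) * Phi t T φ j y
        = (∫ y in c..d, (y - t) ^ (n + k) * Phi t T φ j y)
          - ∫ y in c..r, (y - t) ^ (n + k) * Phi t T φ j y := by
      intro r
      rw [intervalIntegral.integral_interval_sub_left (powPhi_int φ hφ_mem _ j c d)
        (powPhi_int φ hφ_mem _ j c r)]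
    rw [funext hq]
    exact continuous_const.sub (powPhi_prim_cont φ hφ_mem _ j c)
  have hzero : Tendsto (fun p => ∑ k ∈ Finset.range (m - n), ∫ r in c..d,
      ∑ j ∈ Finset.range p,
          (∫ x in c..r, (x - t) ^ (n + (m - n - 1 - k)) * Phi t T φ j x) *
          (∫ y in r..d, (y - t) ^ (n + k) * Phi t T φ j y)) atTop (nhds 0) := by
    have : Tendsto (fun p => ∑ k ∈ Finset.range (m - n), ∫ r in c..d,
        ∑ j ∈ Finset.range p,
            (∫ x in c..r, (x - t) ^ (n + (m - n - 1 - k)) * Phi t T φ j x) *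
            (∫ y in r..d, (y - t) ^ (n + k) * Phi t T φ j y)) atTop
        (nhds (∑ k ∈ Finset.range (m - n), (0:ℝ))) := by
      refine tendsto_finset_sum _ fun k _ => ?_
      set a := n + (m - n - 1 - k) with ha
      set b := n + k with hb
      refine Tendsto.congr (fun p => (intervalIntegral.integral_of_le hcd).symm) ?_
      have h0 : (0:ℝ) = ∫ r in Set.Ioc c d, (0:ℝ) := by simp
      rw [h0]
      refine tendsto_integral_of_dominated_convergence
        (fun _ => Kc t T a * Kc t T b) ?_ ?_ ?_ ?_
      · intro p
        refine Continuous.aestronglyMeasurable ?_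
        refine continuous_finset_sum _ fun j _ => ?_
        refine (powPhi_prim_cont φ hφ_mem a j c).mul ?_
        have hq : ∀ r : ℝ, ∫ y in r..d, (y - t) ^ b * Phi t T φ j y
            = (∫ y in c..d, (y - t) ^ b * Phi t T φ j y)
              - ∫ y in c..r, (y - t) ^ b * Phi t T φ j y := by
          intro r
          rw [intervalIntegral.integral_interval_sub_left (powPhi_int φ hφ_mem _ j c d)
            (powPhi_int φ hφ_mem _ j c r)]
        rw [funext hq]
        exact continuous_const.sub (powPhi_prim_cont φ hφ_mem _ j c)
      · exact integrable_const _
      · intro p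
        filter_upwards [ae_restrict_mem measurableSet_Ioc] with r hr
        rw [Real.norm_eq_abs]
        exact pair_bound φ hφ_mem hφ_on a b (Finset.range p) htc (le_of_lt hr.1)
          (hr.2.trans hdT) (htc.trans (le_of_lt hr.1)) hr.2 hdT
      · filter_upwards [ae_restrict_mem measurableSet_Ioc] with r hr
        have hcr : c ≤ r := le_of_lt hr.1
        have hrd : r ≤ d := hr.2
        have hpp := pair_parseval φ hφ_mem hφ_on hφ_complete
          (gind_memL2 a c r) (gind_memL2 b r d)
        rw [gind_disjoint a b hcr hrd] at hpp
        refine hpp.congr fun p => Finset.sum_congr rfl fun j _ => ?_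
        rw [gind_phi φ a j htc hcr (hrd.trans hdT), gind_phi φ b j (htc.trans hcr) hrd hdT]
    rw [Finset.sum_const_zero] at this
    exact this
  exact hzero.congr fun p => (hrepr p).symm

include hφ_mem hφ_on hφ_complete in
lemma tendsto_S (n m : ℕ) {c d : ℝ} (htc : t ≤ c) (hcd : c ≤ d) (hdT : d ≤ T) :
    Tendsto (fun p => ∑ j ∈ Finset.range p, Sfun t T φ n m j c d)
      atTop (nhds ((1 / 2) * ∫ y in c..d, (y - t) ^ (n + m))) := by
  have h1 := tendsto_sym φ hφ_mem hφ_on hφ_complete n m htc hcd hdT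
  rcases le_total n m with h | h
  · have h2 := tendsto_diff φ hφ_mem hφ_on hφ_complete h htc hcd hdT
    have h3 := (h1.add h2).div_const 2
    rw [add_zero] at h3
    have h4 : ∀ p : ℕ, (∑ j ∈ Finset.range p, (Sfun t T φ n m j c d + Sfun t T φ m n j c d)
        + ∑ j ∈ Finset.range p, (Sfun t T φ n m j c d - Sfun t T φ m n j c d)) / 2
        = ∑ j ∈ Finset.range p, Sfun t T φ n m j c d := by
      intro p
      rw [← Finset.sum_add_distrib]
      have he : ∀ j ∈ Finset.range p, Sfun t T φ n m j c d + Sfun t T φ m n j c d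
          + (Sfun t T φ n m j c d - Sfun t T φ m n j c d) = 2 * Sfun t T φ n m j c d :=
        fun j _ => by ring
      rw [Finset.sum_congr rfl he, ← Finset.mul_sum]
      ring
    have h5 := h3.congr h4
    have : (∫ y in c..d, (y - t) ^ (n + m)) / 2 = (1 / 2) * ∫ y in c..d, (y - t) ^ (n + m) := by
      ring
    rwa [this] at h5
  · have h2 := tendsto_diff φ hφ_mem hφ_on hφ_complete h htc hcd hdT
    have h3 := (h1.sub h2).div_const 2
    rw [sub_zero] at h3
    have h4 : ∀ p : ℕ, (∑ j ∈ Finset.range p, (Sfun t T φ n m j c d + Sfun t T φ m n j c d)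
        - ∑ j ∈ Finset.range p, (Sfun t T φ m n j c d - Sfun t T φ n m j c d)) / 2
        = ∑ j ∈ Finset.range p, Sfun t T φ n m j c d := by
      intro p
      rw [← Finset.sum_sub_distrib]
      have he : ∀ j ∈ Finset.range p, Sfun t T φ n m j c d + Sfun t T φ m n j c d
          - (Sfun t T φ m n j c d - Sfun t T φ n m j c d) = 2 * Sfun t T φ n m j c d :=
        fun j _ => by ring
      rw [Finset.sum_congr rfl he, ← Finset.mul_sum]
      ring
    have h5 := h3.congr h4
    have : (∫ y in c..d, (y - t) ^ (n + m)) / 2 = (1 / 2) * ∫ y in c..d, (y - t) ^ (n + m) := by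
      ring
    rwa [this] at h5

end limits

section bounds

variable {t T : ℝ} (φ : ℕ → ℝ → ℝ)
    (hφ_mem : ∀ j, MemLp (φ j) 2 (volume.restrict (Set.Icc t T)))
    (hφ_on : ∀ i j, (∫ x in Set.Icc t T, φ i x * φ j x) = if i = j then (1 : ℝ) else 0)

include hφ_mem in
lemma sum_Sfun_sub {n m : ℕ} (hnm : n ≤ m) {c d : ℝ} (hcd : c ≤ d) (p : ℕ) :
    ∑ j ∈ Finset.range p, (Sfun t T φ n m j c d - Sfun t T φ m n j c d)
      = ∑ k ∈ Finset.range (m - n), ∫ r in c..d, ∑ j ∈ Finset.range p,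
          (∫ x in c..r, (x - t) ^ (n + (m - n - 1 - k)) * Phi t T φ j x) *
          (∫ y in r..d, (y - t) ^ (n + k) * Phi t T φ j y) := by
  rw [Finset.sum_congr rfl fun j _ => Sfun_sub φ hφ_mem hnm j hcd, Finset.sum_comm]
  refine Finset.sum_congr rfl fun k _ => ?_
  rw [← intervalIntegral.integral_finset_sum]
  intro j _
  refine Continuous.intervalIntegrable ?_ c d
  refine (powPhi_prim_cont φ hφ_mem _ j c).mul ?_
  have hq : ∀ r : ℝ, ∫ y in r..d, (y - t) ^ (n + k) * Phi t T φ j y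
      = (∫ y in c..d, (y - t) ^ (n + k) * Phi t T φ j y)
        - ∫ y in c..r, (y - t) ^ (n + k) * Phi t T φ j y := by
    intro r
    rw [intervalIntegral.integral_interval_sub_left (powPhi_int φ hφ_mem _ j c d)
      (powPhi_int φ hφ_mem _ j c r)]
  rw [funext hq]
  exact continuous_const.sub (powPhi_prim_cont φ hφ_mem _ j c)

include hφ_mem hφ_on in
lemma bound_S_ordered {n m : ℕ} (hnm : n ≤ m) (htT : t ≤ T) (p : ℕ) {c d : ℝ}
    (htc : t ≤ c) (hcd : c ≤ d) (hdT : d ≤ T) :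
    |∑ j ∈ Finset.range p, Sfun t T φ n m j c d|
      ≤ (Kc t T n * Kc t T m + ∑ k ∈ Finset.range (m - n),
          (T - t) * (Kc t T (n + (m - n - 1 - k)) * Kc t T (n + k))) / 2 := by
  have hsym : |∑ j ∈ Finset.range p, (Sfun t T φ n m j c d + Sfun t T φ m n j c d)|
      ≤ Kc t T n * Kc t T m := by
    have hs : ∑ j ∈ Finset.range p, (Sfun t T φ n m j c d + Sfun t T φ m n j c d)
        = ∑ j ∈ Finset.range p, (∫ x in c..d, (x - t) ^ n * Phi t T φ j x) *
            (∫ y in c..d, (y - t) ^ m * Phi t T φ j y) :=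
      Finset.sum_congr rfl fun j _ => Sfun_add φ hφ_mem n m j hcd
    rw [hs]
    exact pair_bound φ hφ_mem hφ_on n m _ htc hcd hdT htc hcd hdT
  have hdiff : |∑ j ∈ Finset.range p, (Sfun t T φ n m j c d - Sfun t T φ m n j c d)|
      ≤ ∑ k ∈ Finset.range (m - n),
          (T - t) * (Kc t T (n + (m - n - 1 - k)) * Kc t T (n + k)) := by
    rw [sum_Sfun_sub φ hφ_mem hnm hcd p]
    refine (Finset.abs_sum_le_sum_abs _ _).trans ?_
    refine Finset.sum_le_sum fun k _ => ?_
    have hb : ∀ r ∈ Set.uIoc c d, ‖∑ j ∈ Finset.range p,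
        (∫ x in c..r, (x - t) ^ (n + (m - n - 1 - k)) * Phi t T φ j x) *
        (∫ y in r..d, (y - t) ^ (n + k) * Phi t T φ j y)‖
        ≤ Kc t T (n + (m - n - 1 - k)) * Kc t T (n + k) := by
      intro r hr
      rw [Set.uIoc_of_le hcd] at hr
      rw [Real.norm_eq_abs]
      exact pair_bound φ hφ_mem hφ_on _ _ _ htc (le_of_lt hr.1) (hr.2.trans hdT)
        (htc.trans (le_of_lt hr.1)) hr.2 hdT
    have h1 := intervalIntegral.norm_integral_le_of_norm_le_const hb
    rw [Real.norm_eq_abs] at h1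
    refine h1.trans ?_
    have h2 : |d - c| ≤ T - t := by
      rw [abs_of_nonneg (by linarith)]
      linarith
    calc Kc t T (n + (m - n - 1 - k)) * Kc t T (n + k) * |d - c|
        ≤ Kc t T (n + (m - n - 1 - k)) * Kc t T (n + k) * (T - t) :=
          mul_le_mul_of_nonneg_left h2 (mul_nonneg (Kc_nonneg _) (Kc_nonneg _))
      _ = (T - t) * (Kc t T (n + (m - n - 1 - k)) * Kc t T (n + k)) := mul_comm _ _
  have heq : ∑ j ∈ Finset.range p, Sfun t T φ n m j c d
      = (∑ j ∈ Finset.range p, (Sfun t T φ n m j c d + Sfun t T φ m n j c d)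
        + ∑ j ∈ Finset.range p, (Sfun t T φ n m j c d - Sfun t T φ m n j c d)) / 2 := by
    rw [← Finset.sum_add_distrib]
    have he : ∀ j ∈ Finset.range p, Sfun t T φ n m j c d + Sfun t T φ m n j c d
        + (Sfun t T φ n m j c d - Sfun t T φ m n j c d) = 2 * Sfun t T φ n m j c d :=
      fun j _ => by ring
    rw [Finset.sum_congr rfl he, ← Finset.mul_sum]
    ring
  rw [heq, abs_div, abs_two]
  have := (abs_add_le (∑ j ∈ Finset.range p, (Sfun t T φ n m j c d + Sfun t T φ m n j c d))
    (∑ j ∈ Finset.range p, (Sfun t T φ n m j c d - Sfun t T φ m n j c d)))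
  have hfin : |∑ j ∈ Finset.range p, (Sfun t T φ n m j c d + Sfun t T φ m n j c d)
      + ∑ j ∈ Finset.range p, (Sfun t T φ n m j c d - Sfun t T φ m n j c d)|
      ≤ Kc t T n * Kc t T m + ∑ k ∈ Finset.range (m - n),
          (T - t) * (Kc t T (n + (m - n - 1 - k)) * Kc t T (n + k)) :=
    this.trans (add_le_add hsym hdiff)
  linarith

include hφ_mem hφ_on in
lemma bound_S (n m : ℕ) (htT : t ≤ T) :
    ∃ M : ℝ, 0 ≤ M ∧ ∀ (p : ℕ) (c d : ℝ), t ≤ c → c ≤ d → d ≤ T →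
      |∑ j ∈ Finset.range p, Sfun t T φ n m j c d| ≤ M := by
  have hKnn : ∀ a b : ℕ, (0:ℝ) ≤ Kc t T a * Kc t T b :=
    fun a b => mul_nonneg (Kc_nonneg _) (Kc_nonneg _)
  rcases le_total n m with h | h
  · refine ⟨(Kc t T n * Kc t T m + ∑ k ∈ Finset.range (m - n),
        (T - t) * (Kc t T (n + (m - n - 1 - k)) * Kc t T (n + k))) / 2, ?_, ?_⟩
    · have : (0:ℝ) ≤ ∑ k ∈ Finset.range (m - n),
          (T - t) * (Kc t T (n + (m - n - 1 - k)) * Kc t T (n + k)) :=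
        Finset.sum_nonneg fun k _ => mul_nonneg (by linarith) (hKnn _ _)
      have := hKnn n m
      linarith
    · intro p c d htc hcd hdT
      exact bound_S_ordered φ hφ_mem hφ_on h htT p htc hcd hdT
  · set M' := (Kc t T m * Kc t T n + ∑ k ∈ Finset.range (n - m),
        (T - t) * (Kc t T (m + (n - m - 1 - k)) * Kc t T (m + k))) / 2 with hM'
    have hM'nn : 0 ≤ M' := by
      have : (0:ℝ) ≤ ∑ k ∈ Finset.range (n - m),
          (T - t) * (Kc t T (m + (n - m - 1 - k)) * Kc t T (m + k)) :=
        Finset.sum_nonneg fun k _ => mul_nonneg (by linarith) (hKnn _ _)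
      have := hKnn m n
      rw [hM']
      linarith
    refine ⟨Kc t T n * Kc t T m + M', by have := hKnn n m; linarith, ?_⟩
    intro p c d htc hcd hdT
    have h1 : ∑ j ∈ Finset.range p, Sfun t T φ n m j c d
        = ∑ j ∈ Finset.range p, (Sfun t T φ n m j c d + Sfun t T φ m n j c d)
          - ∑ j ∈ Finset.range p, Sfun t T φ m n j c d := by
      rw [← Finset.sum_sub_distrib]
      exact Finset.sum_congr rfl fun j _ => by ring
    rw [h1]
    have hsym : |∑ j ∈ Finset.range p, (Sfun t T φ n m j c d + Sfun t T φ m n j c d)|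
        ≤ Kc t T n * Kc t T m := by
      have hs : ∑ j ∈ Finset.range p, (Sfun t T φ n m j c d + Sfun t T φ m n j c d)
          = ∑ j ∈ Finset.range p, (∫ x in c..d, (x - t) ^ n * Phi t T φ j x) *
              (∫ y in c..d, (y - t) ^ m * Phi t T φ j y) :=
        Finset.sum_congr rfl fun j _ => Sfun_add φ hφ_mem n m j hcd
      rw [hs]
      exact pair_bound φ hφ_mem hφ_on n m _ htc hcd hdT htc hcd hdT
    have h2 := bound_S_ordered φ hφ_mem hφ_on h htT p htc hcd hdT
    calc |∑ j ∈ Finset.range p, (Sfun t T φ n m j c d + Sfun t T φ m n j c d)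
        - ∑ j ∈ Finset.range p, Sfun t T φ m n j c d|
        ≤ |∑ j ∈ Finset.range p, (Sfun t T φ n m j c d + Sfun t T φ m n j c d)|
          + |∑ j ∈ Finset.range p, Sfun t T φ m n j c d| := abs_sub _ _
      _ ≤ Kc t T n * Kc t T m + M' := add_le_add hsym h2
  
end bounds

section apps

variable {t T : ℝ} (φ : ℕ → ℝ → ℝ)
    (hφ_mem : ∀ j, MemLp (φ j) 2 (volume.restrict (Set.Icc t T)))
    (hφ_on : ∀ i j, (∫ x in Set.Icc t T, φ i x * φ j x) = if i = j then (1 : ℝ) else 0)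
    (hφ_complete : ∀ f : ℝ → ℝ, MemLp f 2 (volume.restrict (Set.Icc t T)) →
      (∀ j, (∫ x in Set.Icc t T, f x * φ j x) = 0) →
      f =ᵐ[volume.restrict (Set.Icc t T)] 0)

include hφ_mem in
lemma Sfun_cont_right (n m j : ℕ) (c : ℝ) :
    Continuous fun s => Sfun t T φ n m j c s := by
  have hi : ∀ a b : ℝ, IntervalIntegrable
      (fun y => (y - t) ^ m * Phi t T φ j y * ∫ x in c..y, (x - t) ^ n * Phi t T φ j x)
      volume a b := fun a b =>
    (powPhi_int φ hφ_mem m j a b).mul_continuousOn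
      (powPhi_prim_cont φ hφ_mem n j c).continuousOn
  simpa only [Sfun] using intervalIntegral.continuous_primitive hi c

include hφ_mem in
lemma Sfun_left_repr (n m j : ℕ) (x : ℝ) :
    Sfun t T φ n m j x T
      = (∫ s in x..T, (s - t) ^ m * Phi t T φ j s *
            ∫ v in t..s, (v - t) ^ n * Phi t T φ j v)
        - (∫ v in t..x, (v - t) ^ n * Phi t T φ j v) *
            ∫ s in x..T, (s - t) ^ m * Phi t T φ j s := by
  rw [Sfun]
  have h1 : ∀ s : ℝ, ∫ v in x..s, (v - t) ^ n * Phi t T φ j v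
      = (∫ v in t..s, (v - t) ^ n * Phi t T φ j v)
        - ∫ v in t..x, (v - t) ^ n * Phi t T φ j v := by
    intro s
    rw [intervalIntegral.integral_interval_sub_left (powPhi_int φ hφ_mem n j t s)
      (powPhi_int φ hφ_mem n j t x)]
  have h2 : ∀ s ∈ Set.uIcc x T, (s - t) ^ m * Phi t T φ j s *
        ∫ v in x..s, (v - t) ^ n * Phi t T φ j v
      = (s - t) ^ m * Phi t T φ j s * (∫ v in t..s, (v - t) ^ n * Phi t T φ j v)
        - (∫ v in t..x, (v - t) ^ n * Phi t T φ j v) * ((s - t) ^ m * Phi t T φ j s) := by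
    intro s _
    rw [h1 s]
    ring
  rw [intervalIntegral.integral_congr h2, intervalIntegral.integral_sub, intervalIntegral.integral_const_mul]
  · exact (powPhi_int φ hφ_mem m j x T).mul_continuousOn
      (powPhi_prim_cont φ hφ_mem n j t).continuousOn
  · exact (powPhi_int φ hφ_mem m j x T).const_mul _

include hφ_mem in
lemma Sfun_cont_left (n m j : ℕ) :
    Continuous fun x => Sfun t T φ n m j x T := by
  rw [funext (Sfun_left_repr φ hφ_mem n m j)]
  have hGB : ∀ a b : ℝ, IntervalIntegrable
      (fun s => (s - t) ^ m * Phi t T φ j s * ∫ v in t..s, (v - t) ^ n * Phi t T φ j v)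
      volume a b := fun a b =>
    (powPhi_int φ hφ_mem m j a b).mul_continuousOn
      (powPhi_prim_cont φ hφ_mem n j t).continuousOn
  have c1 : Continuous fun x => ∫ s in x..T, (s - t) ^ m * Phi t T φ j s *
      ∫ v in t..s, (v - t) ^ n * Phi t T φ j v := by
    have he : ∀ x : ℝ, (∫ s in x..T, (s - t) ^ m * Phi t T φ j s *
        ∫ v in t..s, (v - t) ^ n * Phi t T φ j v)
        = (∫ s in t..T, (s - t) ^ m * Phi t T φ j s *
            ∫ v in t..s, (v - t) ^ n * Phi t T φ j v)
          - ∫ s in t..x, (s - t) ^ m * Phi t T φ j s *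
              ∫ v in t..s, (v - t) ^ n * Phi t T φ j v := by
      intro x
      rw [intervalIntegral.integral_interval_sub_left (hGB t T) (hGB t x)]
    rw [funext he]
    exact continuous_const.sub (intervalIntegral.continuous_primitive hGB t)
  have c2 : Continuous fun x => ∫ s in x..T, (s - t) ^ m * Phi t T φ j s := by
    have he : ∀ x : ℝ, (∫ s in x..T, (s - t) ^ m * Phi t T φ j s)
        = (∫ s in t..T, (s - t) ^ m * Phi t T φ j s)
          - ∫ s in t..x, (s - t) ^ m * Phi t T φ j s := by
      intro x
      rw [intervalIntegral.integral_interval_sub_left (powPhi_int φ hφ_mem m j t T)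
        (powPhi_int φ hφ_mem m j t x)]
    rw [funext he]
    exact continuous_const.sub (powPhi_prim_cont φ hφ_mem m j t)
  exact c1.sub ((powPhi_prim_cont φ hφ_mem n j t).mul c2)

lemma pow_integral_bound (l : ℕ) {c d : ℝ} (htc : t ≤ c) (hcd : c ≤ d) (hdT : d ≤ T) :
    |∫ u in c..d, (u - t) ^ l| ≤ (T - t) * (T - t) ^ l := by
  have hb : ∀ u ∈ Set.uIoc c d, ‖(u - t) ^ l‖ ≤ (T - t) ^ l := by
    intro u hu
    rw [Set.uIoc_of_le hcd] at hu
    rw [Real.norm_eq_abs, abs_pow]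
    refine pow_le_pow_left₀ (abs_nonneg _) ?_ l
    rw [abs_of_nonneg (by linarith [hu.1] : (0:ℝ) ≤ u - t)]
    linarith [hu.2]
  have h1 := intervalIntegral.norm_integral_le_of_norm_le_const hb
  rw [Real.norm_eq_abs] at h1
  refine h1.trans ?_
  have h2 : |d - c| ≤ T - t := by
    rw [abs_of_nonneg (by linarith)]
    linarith
  calc (T - t) ^ l * |d - c| ≤ (T - t) ^ l * (T - t) :=
        mul_le_mul_of_nonneg_left h2 (pow_nonneg (by linarith) l)
    _ = (T - t) * (T - t) ^ l := mul_comm _ _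

end apps

section main1

variable {t T : ℝ} (φ : ℕ → ℝ → ℝ)
    (hφ_mem : ∀ j, MemLp (φ j) 2 (volume.restrict (Set.Icc t T)))
    (hφ_on : ∀ i j, (∫ x in Set.Icc t T, φ i x * φ j x) = if i = j then (1 : ℝ) else 0)
    (hφ_complete : ∀ f : ℝ → ℝ, MemLp f 2 (volume.restrict (Set.Icc t T)) →
      (∀ j, (∫ x in Set.Icc t T, f x * φ j x) = 0) →
      f =ᵐ[volume.restrict (Set.Icc t T)] 0)

include hφ_mem hφ_on hφ_complete in
lemma main1 (htT : t < T) (l₁ l₂ l₃ : ℕ) :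
    Tendsto (fun p => ∑ j₃ ∈ Finset.range (p + 1),
      ((∑ j₁ ∈ Finset.range (p + 1), ∫ s in t..T, (s - t) ^ l₃ * Phi t T φ j₃ s *
          ∫ y in t..s, (y - t) ^ l₂ * Phi t T φ j₁ y *
            ∫ x in t..y, (x - t) ^ l₁ * Phi t T φ j₁ x)
        - (1 / 2) * ∫ s in t..T, (s - t) ^ l₃ * Phi t T φ j₃ s *
            ∫ u in t..s, (u - t) ^ (l₁ + l₂)) ^ 2)
      atTop (nhds 0) := by
  haveI := finmeas t T
  set G : ℝ → ℝ := fun s => ∫ u in t..s, (u - t) ^ (l₁ + l₂) with hG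
  set F : ℕ → ℝ → ℝ := fun q s => ∑ j ∈ Finset.range q, Sfun t T φ l₁ l₂ j t s with hF
  set h : ℕ → ℝ → ℝ := fun q s => (s - t) ^ l₃ * (F q s - (1 / 2) * G s) with hh
  have hGint : ∀ a b : ℝ, IntervalIntegrable (fun u : ℝ => (u - t) ^ (l₁ + l₂)) volume a b :=
    fun a b => ((continuous_id.sub continuous_const).pow _).intervalIntegrable a b
  have hGcont : Continuous G := intervalIntegral.continuous_primitive hGint t
  have hFcont : ∀ q, Continuous (F q) :=
    fun q => continuous_finset_sum _ fun j _ => Sfun_cont_right φ hφ_mem l₁ l₂ j t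
  have hhcont : ∀ q, Continuous (h q) := fun q =>
    ((continuous_id.sub continuous_const).pow _).mul
      ((hFcont q).sub (continuous_const.mul hGcont))
  obtain ⟨M, hM0, hM⟩ := bound_S φ hφ_mem hφ_on l₁ l₂ htT.le
  have hGbd : ∀ s ∈ Set.Icc t T, |G s| ≤ (T - t) * (T - t) ^ (l₁ + l₂) :=
    fun s hs => pow_integral_bound (l₁ + l₂) (le_refl t) hs.1 hs.2
  set Cb : ℝ := (T - t) ^ l₃ * (M + (1 / 2) * ((T - t) * (T - t) ^ (l₁ + l₂))) with hCb
  have htT0 : (0:ℝ) ≤ T - t := by linarith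
  have hCb0 : 0 ≤ Cb := by
    refine mul_nonneg (pow_nonneg htT0 _) ?_
    have : (0:ℝ) ≤ (T - t) * (T - t) ^ (l₁ + l₂) := mul_nonneg htT0 (pow_nonneg htT0 _)
    linarith
  have hhbd : ∀ q, ∀ s ∈ Set.Icc t T, |h q s| ≤ Cb := by
    intro q s hs
    rw [hh]
    simp only []
    rw [abs_mul, abs_pow]
    refine mul_le_mul ?_ ?_ (abs_nonneg _) (pow_nonneg htT0 _)
    · refine pow_le_pow_left₀ (abs_nonneg _) ?_ l₃
      rw [abs_of_nonneg (by linarith [hs.1] : (0:ℝ) ≤ s - t)]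
      linarith [hs.2]
    · refine (abs_sub _ _).trans ?_
      have h1 : |F q s| ≤ M := hM q t s (le_refl t) hs.1 hs.2
      have h2 : |(1 / 2 : ℝ) * G s| ≤ (1 / 2) * ((T - t) * (T - t) ^ (l₁ + l₂)) := by
        rw [abs_mul, abs_of_nonneg (by norm_num : (0:ℝ) ≤ (1/2:ℝ))]
        have := hGbd s hs
        linarith
      linarith
  have hmemh : ∀ q, MemLp (h q) 2 (volume.restrict (Set.Icc t T)) := by
    intro q
    refine MemLp.of_bound (hhcont q).aestronglyMeasurable Cb ?_
    filter_upwards [ae_restrict_mem measurableSet_Icc] with s hs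
    rw [Real.norm_eq_abs]
    exact hhbd q s hs
  have erreq : ∀ (q : ℕ) (j₃ : ℕ),
      (∑ j₁ ∈ Finset.range q, ∫ s in t..T, (s - t) ^ l₃ * Phi t T φ j₃ s *
          ∫ y in t..s, (y - t) ^ l₂ * Phi t T φ j₁ y *
            ∫ x in t..y, (x - t) ^ l₁ * Phi t T φ j₁ x)
        - (1 / 2) * (∫ s in t..T, (s - t) ^ l₃ * Phi t T φ j₃ s *
            ∫ u in t..s, (u - t) ^ (l₁ + l₂))
      = ∫ x in Set.Icc t T, h q x * φ j₃ x := by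
    intro q j₃
    have hreduce : ∀ (j₁ : ℕ) (s : ℝ), (∫ y in t..s, (y - t) ^ l₂ * Phi t T φ j₁ y *
        ∫ x in t..y, (x - t) ^ l₁ * Phi t T φ j₁ x) = Sfun t T φ l₁ l₂ j₁ t s := fun _ _ => rfl
    simp only [hreduce]
    have hsum : ∑ j₁ ∈ Finset.range q, ∫ s in t..T, (s - t) ^ l₃ * Phi t T φ j₃ s *
        Sfun t T φ l₁ l₂ j₁ t s
        = ∫ s in t..T, (s - t) ^ l₃ * Phi t T φ j₃ s * F q s := by
      rw [← intervalIntegral.integral_finset_sum (fun j₁ _ =>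
        (powPhi_int φ hφ_mem l₃ j₃ t T).mul_continuousOn
          (Sfun_cont_right φ hφ_mem l₁ l₂ j₁ t).continuousOn)]
      refine intervalIntegral.integral_congr fun s _ => ?_
      rw [hF]
      simp only []
      rw [Finset.mul_sum]
    have hR : ∫ x in Set.Icc t T, h q x * φ j₃ x
        = ∫ s in t..T, ((s - t) ^ l₃ * Phi t T φ j₃ s * F q s
            - (1 / 2) * ((s - t) ^ l₃ * Phi t T φ j₃ s * G s)) := by
      rw [integral_Icc_eq_integral_Ioc, ← intervalIntegral.integral_of_le htT.le]
      refine intervalIntegral.integral_congr fun s hsmem => ?_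
      rw [Set.uIcc_of_le htT.le] at hsmem
      rw [hh]
      simp only []
      rw [Phi, Set.indicator_of_mem hsmem]
      ring
    rw [hsum, hR, intervalIntegral.integral_sub, intervalIntegral.integral_const_mul]
    · exact (powPhi_int φ hφ_mem l₃ j₃ t T).mul_continuousOn (hFcont q).continuousOn
    · exact ((powPhi_int φ hφ_mem l₃ j₃ t T).mul_continuousOn hGcont.continuousOn).const_mul _
  have bessel_step : ∀ p : ℕ,
      ∑ j₃ ∈ Finset.range (p + 1),
        ((∑ j₁ ∈ Finset.range (p + 1), ∫ s in t..T, (s - t) ^ l₃ * Phi t T φ j₃ s *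
            ∫ y in t..s, (y - t) ^ l₂ * Phi t T φ j₁ y *
              ∫ x in t..y, (x - t) ^ l₁ * Phi t T φ j₁ x)
          - (1 / 2) * ∫ s in t..T, (s - t) ^ l₃ * Phi t T φ j₃ s *
              ∫ u in t..s, (u - t) ^ (l₁ + l₂)) ^ 2
      ≤ ∫ x in Set.Icc t T, h (p + 1) x * h (p + 1) x := by
    intro p
    rw [Finset.sum_congr rfl fun j₃ _ => by rw [erreq (p + 1) j₃]]
    exact bessel φ hφ_mem hφ_on (hmemh (p + 1)) _
  have hDCT : Tendsto (fun q => ∫ x in Set.Icc t T, h q x * h q x) atTop (nhds 0) := by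
    rw [show (0:ℝ) = ∫ x in Set.Icc t T, (0:ℝ) by simp]
    refine tendsto_integral_of_dominated_convergence (fun _ => Cb * Cb)
      (fun q => ((hhcont q).mul (hhcont q)).aestronglyMeasurable)
      (integrable_const _) ?_ ?_
    · intro q
      filter_upwards [ae_restrict_mem measurableSet_Icc] with s hs
      rw [Real.norm_eq_abs, abs_mul]
      exact mul_le_mul (hhbd q s hs) (hhbd q s hs) (abs_nonneg _) hCb0
    · filter_upwards [ae_restrict_mem measurableSet_Icc] with s hs
      have hT' : Tendsto (fun q => F q s) atTop (nhds ((1 / 2) * G s)) :=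
        tendsto_S φ hφ_mem hφ_on hφ_complete l₁ l₂ (le_refl t) hs.1 hs.2
      have hhs : Tendsto (fun q => h q s) atTop (nhds 0) := by
        have h2 : Tendsto (fun q => F q s - (1 / 2) * G s) atTop (nhds 0) := by
          simpa using hT'.sub_const ((1 / 2) * G s)
        have h3 := h2.const_mul ((s - t) ^ l₃)
        rw [mul_zero] at h3
        exact h3
      simpa using hhs.mul hhs
  refine squeeze_zero (fun p => Finset.sum_nonneg fun j₃ _ => sq_nonneg _) bessel_step ?_
  exact hDCT.comp (tendsto_add_atTop_nat 1)

end main1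

section main2

variable {t T : ℝ} (φ : ℕ → ℝ → ℝ)
    (hφ_mem : ∀ j, MemLp (φ j) 2 (volume.restrict (Set.Icc t T)))
    (hφ_on : ∀ i j, (∫ x in Set.Icc t T, φ i x * φ j x) = if i = j then (1 : ℝ) else 0)
    (hφ_complete : ∀ f : ℝ → ℝ, MemLp f 2 (volume.restrict (Set.Icc t T)) →
      (∀ j, (∫ x in Set.Icc t T, f x * φ j x) = 0) →
      f =ᵐ[volume.restrict (Set.Icc t T)] 0)

include hφ_mem in
lemma Crepr (htT : t ≤ T) (l₁ l₂ l₃ : ℕ) (j j₁ : ℕ) :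
    (∫ s in t..T, (s - t) ^ l₃ * Phi t T φ j s *
        ∫ v in t..s, (v - t) ^ l₂ * Phi t T φ j v *
          ∫ x in t..v, (x - t) ^ l₁ * Phi t T φ j₁ x)
      = ∫ x in t..T, (x - t) ^ l₁ * Phi t T φ j₁ x * Sfun t T φ l₂ l₃ j x T := by
  have hf : ∀ a b : ℝ, IntervalIntegrable (fun x => (x - t) ^ l₁ * Phi t T φ j₁ x) volume a b :=
    powPhi_int φ hφ_mem l₁ j₁
  have hg : ∀ a b : ℝ, IntervalIntegrable (fun s => (s - t) ^ l₃ * Phi t T φ j s) volume a b :=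
    powPhi_int φ hφ_mem l₃ j
  have hh2 : ∀ a b : ℝ, IntervalIntegrable (fun v => (v - t) ^ l₂ * Phi t T φ j v) volume a b :=
    powPhi_int φ hφ_mem l₂ j
  have hBcont : Continuous fun r => ∫ v in t..r, (v - t) ^ l₂ * Phi t T φ j v :=
    powPhi_prim_cont φ hφ_mem l₂ j t
  have hfprim : Continuous fun r => ∫ x in t..r, (x - t) ^ l₁ * Phi t T φ j₁ x :=
    powPhi_prim_cont φ hφ_mem l₁ j₁ t
  have hfB : ∀ a b : ℝ, IntervalIntegrable
      (fun x => (x - t) ^ l₁ * Phi t T φ j₁ x * ∫ v in t..x, (v - t) ^ l₂ * Phi t T φ j v)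
      volume a b := fun a b => (hf a b).mul_continuousOn hBcont.continuousOn
  have hgB : ∀ a b : ℝ, IntervalIntegrable
      (fun s => (s - t) ^ l₃ * Phi t T φ j s * ∫ v in t..s, (v - t) ^ l₂ * Phi t T φ j v)
      volume a b := fun a b => (hg a b).mul_continuousOn hBcont.continuousOn
  have hfBprim : Continuous fun r => ∫ x in t..r,
      (x - t) ^ l₁ * Phi t T φ j₁ x * ∫ v in t..x, (v - t) ^ l₂ * Phi t T φ j v :=
    intervalIntegral.continuous_primitive hfB t
  -- step a : rewrite the inner double integral
  have stepa : ∀ s, t ≤ s →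
      (∫ v in t..s, (v - t) ^ l₂ * Phi t T φ j v *
          ∫ x in t..v, (x - t) ^ l₁ * Phi t T φ j₁ x)
      = (∫ x in t..s, (x - t) ^ l₁ * Phi t T φ j₁ x) *
          (∫ v in t..s, (v - t) ^ l₂ * Phi t T φ j v)
        - ∫ x in t..s, (x - t) ^ l₁ * Phi t T φ j₁ x *
            ∫ v in t..x, (v - t) ^ l₂ * Phi t T φ j v := by
    intro s hts
    have hsw := swapF hts (f := fun x => (x - t) ^ l₁ * Phi t T φ j₁ x)
      (g := fun v => (v - t) ^ l₂ * Phi t T φ j v) ((hf t s).1) ((hh2 t s).1)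
    rw [hsw]
    have he : ∀ x ∈ Set.uIcc t s, (x - t) ^ l₁ * Phi t T φ j₁ x *
        (∫ v in x..s, (v - t) ^ l₂ * Phi t T φ j v)
        = (x - t) ^ l₁ * Phi t T φ j₁ x * (∫ v in t..s, (v - t) ^ l₂ * Phi t T φ j v)
          - (x - t) ^ l₁ * Phi t T φ j₁ x * ∫ v in t..x, (v - t) ^ l₂ * Phi t T φ j v := by
      intro x _
      rw [← intervalIntegral.integral_interval_sub_left (hh2 t s) (hh2 t x)]
      ring
    rw [intervalIntegral.integral_congr he, intervalIntegral.integral_sub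
      ((hf t s).mul_const _) (hfB t s), intervalIntegral.integral_mul_const]
  -- full rewrite of the LHS
  have stepb : (∫ s in t..T, (s - t) ^ l₃ * Phi t T φ j s *
      ∫ v in t..s, (v - t) ^ l₂ * Phi t T φ j v *
        ∫ x in t..v, (x - t) ^ l₁ * Phi t T φ j₁ x)
      = (∫ s in t..T, ((s - t) ^ l₃ * Phi t T φ j s *
            ∫ v in t..s, (v - t) ^ l₂ * Phi t T φ j v) *
            ∫ x in t..s, (x - t) ^ l₁ * Phi t T φ j₁ x)
        - ∫ s in t..T, (s - t) ^ l₃ * Phi t T φ j s *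
            ∫ x in t..s, (x - t) ^ l₁ * Phi t T φ j₁ x *
              ∫ v in t..x, (v - t) ^ l₂ * Phi t T φ j v := by
    rw [← intervalIntegral.integral_sub]
    · refine intervalIntegral.integral_congr fun s hs => ?_
      rw [Set.uIcc_of_le htT] at hs
      rw [stepa s hs.1]
      ring
    · exact (hgB t T).mul_continuousOn hfprim.continuousOn
    · exact (hg t T).mul_continuousOn hfBprim.continuousOn
  rw [stepb]
  have hsw1 := swapF htT (f := fun x => (x - t) ^ l₁ * Phi t T φ j₁ x)
    (g := fun s => (s - t) ^ l₃ * Phi t T φ j s *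
      ∫ v in t..s, (v - t) ^ l₂ * Phi t T φ j v) ((hf t T).1) ((hgB t T).1)
  have hsw2 := swapF htT (f := fun x => (x - t) ^ l₁ * Phi t T φ j₁ x *
      ∫ v in t..x, (v - t) ^ l₂ * Phi t T φ j v)
    (g := fun s => (s - t) ^ l₃ * Phi t T φ j s) ((hfB t T).1) ((hg t T).1)
  rw [hsw1, hsw2, ← intervalIntegral.integral_sub]
  · refine intervalIntegral.integral_congr fun x hx => ?_
    rw [Sfun_left_repr φ hφ_mem l₂ l₃ j x]
    ring
  · refine (hf t T).mul_continuousOn ?_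
    have he : ∀ x : ℝ, (∫ s in x..T, (s - t) ^ l₃ * Phi t T φ j s *
        ∫ v in t..s, (v - t) ^ l₂ * Phi t T φ j v)
        = (∫ s in t..T, (s - t) ^ l₃ * Phi t T φ j s *
            ∫ v in t..s, (v - t) ^ l₂ * Phi t T φ j v)
          - ∫ s in t..x, (s - t) ^ l₃ * Phi t T φ j s *
              ∫ v in t..s, (v - t) ^ l₂ * Phi t T φ j v := by
      intro x
      rw [intervalIntegral.integral_interval_sub_left (hgB t T) (hgB t x)]
    rw [funext he]
    exact (continuous_const.sub (intervalIntegral.continuous_primitive hgB t)).continuousOn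
  · refine (hfB t T).mul_continuousOn ?_
    have he : ∀ x : ℝ, (∫ s in x..T, (s - t) ^ l₃ * Phi t T φ j s)
        = (∫ s in t..T, (s - t) ^ l₃ * Phi t T φ j s)
          - ∫ s in t..x, (s - t) ^ l₃ * Phi t T φ j s := by
      intro x
      rw [intervalIntegral.integral_interval_sub_left (hg t T) (hg t x)]
    rw [funext he]
    exact (continuous_const.sub (powPhi_prim_cont φ hφ_mem l₃ j t)).continuousOn

include hφ_mem in
lemma ttarget (htT : t ≤ T) (l₁ l₂₃ : ℕ) (j₁ : ℕ) :
    (∫ s in t..T, (s - t) ^ l₂₃ * ∫ u in t..s, (u - t) ^ l₁ * Phi t T φ j₁ u)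
      = ∫ x in t..T, (x - t) ^ l₁ * Phi t T φ j₁ x * ∫ s in x..T, (s - t) ^ l₂₃ := by
  exact swapF htT ((powPhi_int φ hφ_mem l₁ j₁ t T).1)
    ((((continuous_id.sub continuous_const).pow l₂₃).intervalIntegrable t T).1)

end main2

section main2b

variable {t T : ℝ} (φ : ℕ → ℝ → ℝ)
    (hφ_mem : ∀ j, MemLp (φ j) 2 (volume.restrict (Set.Icc t T)))
    (hφ_on : ∀ i j, (∫ x in Set.Icc t T, φ i x * φ j x) = if i = j then (1 : ℝ) else 0)
    (hφ_complete : ∀ f : ℝ → ℝ, MemLp f 2 (volume.restrict (Set.Icc t T)) →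
      (∀ j, (∫ x in Set.Icc t T, f x * φ j x) = 0) →
      f =ᵐ[volume.restrict (Set.Icc t T)] 0)

include hφ_mem hφ_on hφ_complete in
lemma main2 (htT : t < T) (l₁ l₂ l₃ : ℕ) :
    Tendsto (fun p => ∑ j₁ ∈ Finset.range (p + 1),
      ((∑ j ∈ Finset.range (p + 1), ∫ s in t..T, (s - t) ^ l₃ * Phi t T φ j s *
          ∫ v in t..s, (v - t) ^ l₂ * Phi t T φ j v *
            ∫ x in t..v, (x - t) ^ l₁ * Phi t T φ j₁ x)
        - (1 / 2) * ∫ s in t..T, (s - t) ^ (l₂ + l₃) *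
            ∫ u in t..s, (u - t) ^ l₁ * Phi t T φ j₁ u) ^ 2)
      atTop (nhds 0) := by
  haveI := finmeas t T
  set G : ℝ → ℝ := fun x => ∫ s in x..T, (s - t) ^ (l₂ + l₃) with hG
  set V : ℕ → ℝ → ℝ := fun q x => ∑ j ∈ Finset.range q, Sfun t T φ l₂ l₃ j x T with hV
  set h : ℕ → ℝ → ℝ := fun q x => (x - t) ^ l₁ * (V q x - (1 / 2) * G x) with hh
  have hGint : ∀ a b : ℝ, IntervalIntegrable (fun u : ℝ => (u - t) ^ (l₂ + l₃)) volume a b :=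
    fun a b => ((continuous_id.sub continuous_const).pow _).intervalIntegrable a b
  have hGcont : Continuous G := by
    have he : ∀ x : ℝ, (∫ s in x..T, (s - t) ^ (l₂ + l₃))
        = (∫ s in t..T, (s - t) ^ (l₂ + l₃)) - ∫ s in t..x, (s - t) ^ (l₂ + l₃) := by
      intro x
      rw [intervalIntegral.integral_interval_sub_left (hGint t T) (hGint t x)]
    rw [hG, funext he]
    exact continuous_const.sub (intervalIntegral.continuous_primitive hGint t)
  have hVcont : ∀ q, Continuous (V q) :=
    fun q => continuous_finset_sum _ fun j _ => Sfun_cont_left φ hφ_mem l₂ l₃ j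
  have hhcont : ∀ q, Continuous (h q) := fun q =>
    ((continuous_id.sub continuous_const).pow _).mul
      ((hVcont q).sub (continuous_const.mul hGcont))
  obtain ⟨M, hM0, hM⟩ := bound_S φ hφ_mem hφ_on l₂ l₃ htT.le
  have hGbd : ∀ x ∈ Set.Icc t T, |G x| ≤ (T - t) * (T - t) ^ (l₂ + l₃) :=
    fun x hx => pow_integral_bound (l₂ + l₃) hx.1 hx.2 (le_refl T)
  set Cb : ℝ := (T - t) ^ l₁ * (M + (1 / 2) * ((T - t) * (T - t) ^ (l₂ + l₃))) with hCb
  have htT0 : (0:ℝ) ≤ T - t := by linarith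
  have hCb0 : 0 ≤ Cb := by
    refine mul_nonneg (pow_nonneg htT0 _) ?_
    have : (0:ℝ) ≤ (T - t) * (T - t) ^ (l₂ + l₃) := mul_nonneg htT0 (pow_nonneg htT0 _)
    linarith
  have hhbd : ∀ q, ∀ x ∈ Set.Icc t T, |h q x| ≤ Cb := by
    intro q x hx
    rw [hh]
    simp only []
    rw [abs_mul, abs_pow]
    refine mul_le_mul ?_ ?_ (abs_nonneg _) (pow_nonneg htT0 _)
    · refine pow_le_pow_left₀ (abs_nonneg _) ?_ l₁
      rw [abs_of_nonneg (by linarith [hx.1] : (0:ℝ) ≤ x - t)]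
      linarith [hx.2]
    · refine (abs_sub _ _).trans ?_
      have h1 : |V q x| ≤ M := hM q x T hx.1 hx.2 (le_refl T)
      have h2 : |(1 / 2 : ℝ) * G x| ≤ (1 / 2) * ((T - t) * (T - t) ^ (l₂ + l₃)) := by
        rw [abs_mul, abs_of_nonneg (by norm_num : (0:ℝ) ≤ (1/2:ℝ))]
        have := hGbd x hx
        linarith
      linarith
  have hmemh : ∀ q, MemLp (h q) 2 (volume.restrict (Set.Icc t T)) := by
    intro q
    refine MemLp.of_bound (hhcont q).aestronglyMeasurable Cb ?_
    filter_upwards [ae_restrict_mem measurableSet_Icc] with x hx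
    rw [Real.norm_eq_abs]
    exact hhbd q x hx
  have erreq : ∀ (q : ℕ) (j₁ : ℕ),
      (∑ j ∈ Finset.range q, ∫ s in t..T, (s - t) ^ l₃ * Phi t T φ j s *
          ∫ v in t..s, (v - t) ^ l₂ * Phi t T φ j v *
            ∫ x in t..v, (x - t) ^ l₁ * Phi t T φ j₁ x)
        - (1 / 2) * (∫ s in t..T, (s - t) ^ (l₂ + l₃) *
            ∫ u in t..s, (u - t) ^ l₁ * Phi t T φ j₁ u)
      = ∫ x in Set.Icc t T, h q x * φ j₁ x := by
    intro q j₁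
    have hsum : ∑ j ∈ Finset.range q, ∫ s in t..T, (s - t) ^ l₃ * Phi t T φ j s *
        ∫ v in t..s, (v - t) ^ l₂ * Phi t T φ j v *
          ∫ x in t..v, (x - t) ^ l₁ * Phi t T φ j₁ x
        = ∫ x in t..T, (x - t) ^ l₁ * Phi t T φ j₁ x * V q x := by
      rw [Finset.sum_congr rfl fun j _ => Crepr φ hφ_mem htT.le l₁ l₂ l₃ j j₁]
      rw [← intervalIntegral.integral_finset_sum (fun j _ =>
        (powPhi_int φ hφ_mem l₁ j₁ t T).mul_continuousOn
          (Sfun_cont_left φ hφ_mem l₂ l₃ j).continuousOn)]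
      refine intervalIntegral.integral_congr fun x _ => ?_
      rw [hV]
      simp only []
      rw [Finset.mul_sum]
    have hR : ∫ x in Set.Icc t T, h q x * φ j₁ x
        = ∫ x in t..T, ((x - t) ^ l₁ * Phi t T φ j₁ x * V q x
            - (1 / 2) * ((x - t) ^ l₁ * Phi t T φ j₁ x * G x)) := by
      rw [integral_Icc_eq_integral_Ioc, ← intervalIntegral.integral_of_le htT.le]
      refine intervalIntegral.integral_congr fun x hxmem => ?_
      rw [Set.uIcc_of_le htT.le] at hxmem
      rw [hh]
      simp only []
      rw [Phi, Set.indicator_of_mem hxmem]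
      ring
    rw [hsum, ttarget φ hφ_mem htT.le l₁ (l₂ + l₃) j₁, hR,
      intervalIntegral.integral_sub, intervalIntegral.integral_const_mul]
    · exact (powPhi_int φ hφ_mem l₁ j₁ t T).mul_continuousOn (hVcont q).continuousOn
    · exact ((powPhi_int φ hφ_mem l₁ j₁ t T).mul_continuousOn hGcont.continuousOn).const_mul _
  have bessel_step : ∀ p : ℕ,
      ∑ j₁ ∈ Finset.range (p + 1),
        ((∑ j ∈ Finset.range (p + 1), ∫ s in t..T, (s - t) ^ l₃ * Phi t T φ j s *
            ∫ v in t..s, (v - t) ^ l₂ * Phi t T φ j v *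
              ∫ x in t..v, (x - t) ^ l₁ * Phi t T φ j₁ x)
          - (1 / 2) * ∫ s in t..T, (s - t) ^ (l₂ + l₃) *
              ∫ u in t..s, (u - t) ^ l₁ * Phi t T φ j₁ u) ^ 2
      ≤ ∫ x in Set.Icc t T, h (p + 1) x * h (p + 1) x := by
    intro p
    rw [Finset.sum_congr rfl fun j₁ _ => by rw [erreq (p + 1) j₁]]
    exact bessel φ hφ_mem hφ_on (hmemh (p + 1)) _
  have hDCT : Tendsto (fun q => ∫ x in Set.Icc t T, h q x * h q x) atTop (nhds 0) := by
    rw [show (0:ℝ) = ∫ x in Set.Icc t T, (0:ℝ) by simp]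
    refine tendsto_integral_of_dominated_convergence (fun _ => Cb * Cb)
      (fun q => ((hhcont q).mul (hhcont q)).aestronglyMeasurable)
      (integrable_const _) ?_ ?_
    · intro q
      filter_upwards [ae_restrict_mem measurableSet_Icc] with x hx
      rw [Real.norm_eq_abs, abs_mul]
      exact mul_le_mul (hhbd q x hx) (hhbd q x hx) (abs_nonneg _) hCb0
    · filter_upwards [ae_restrict_mem measurableSet_Icc] with x hx
      have hT' : Tendsto (fun q => V q x) atTop (nhds ((1 / 2) * G x)) :=
        tendsto_S φ hφ_mem hφ_on hφ_complete l₂ l₃ hx.1 hx.2 (le_refl T)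
      have hhs : Tendsto (fun q => h q x) atTop (nhds 0) := by
        have h2 : Tendsto (fun q => V q x - (1 / 2) * G x) atTop (nhds 0) := by
          simpa using hT'.sub_const ((1 / 2) * G x)
        have h3 := h2.const_mul ((x - t) ^ l₁)
        rw [mul_zero] at h3
        exact h3
      simpa using hhs.mul hhs
  refine squeeze_zero (fun p => Finset.sum_nonneg fun j₁ _ => sq_nonneg _) bessel_step ?_
  exact hDCT.comp (tendsto_add_atTop_nat 1)

end main2b

/-- condition (july700000) for k = 3, r = 1, adjacent pairs {1,2} and {2,3},
for power weight functions `ψᵢ(τ) = (τ − t)^{lᵢ}` and an arbitrary CONS. -/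
theorem stmt8
    (t T : ℝ) (ht : 0 ≤ t) (htT : t < T)
    (φ : ℕ → ℝ → ℝ)
    (hφ_mem : ∀ j, MemLp (φ j) 2 (volume.restrict (Set.Icc t T)))
    (hφ_on : ∀ i j, (∫ x in Set.Icc t T, φ i x * φ j x) = if i = j then (1 : ℝ) else 0)
    (hφ_complete : ∀ f : ℝ → ℝ, MemLp f 2 (volume.restrict (Set.Icc t T)) →
      (∀ j, (∫ x in Set.Icc t T, f x * φ j x) = 0) →
      f =ᵐ[volume.restrict (Set.Icc t T)] 0)
    (l₁ l₂ l₃ : ℕ) (ψ₁ ψ₂ ψ₃ : ℝ → ℝ)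
    (hψ₁ : ψ₁ = fun τ => (τ - t) ^ l₁)
    (hψ₂ : ψ₂ = fun τ => (τ - t) ^ l₂)
    (hψ₃ : ψ₃ = fun τ => (τ - t) ^ l₃)
    (C : ℕ → ℕ → ℕ → ℝ)
    (hC : ∀ j₃ j₂ j₁, C j₃ j₂ j₁ =
      ∫ t₃ in t..T, ψ₃ t₃ * φ j₃ t₃ *
        ∫ t₂ in t..t₃, ψ₂ t₂ * φ j₂ t₂ *
          ∫ t₁ in t..t₂, ψ₁ t₁ * φ j₁ t₁) :
    Tendsto
      (fun p => ∑ j₃ ∈ Finset.range (p + 1),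
        ((∑ j₁ ∈ Finset.range (p + 1), C j₃ j₁ j₁) -
          (1 / 2) * ∫ s in t..T, ψ₃ s * φ j₃ s * ∫ u in t..s, ψ₁ u * ψ₂ u) ^ 2)
      atTop (nhds 0) ∧
    Tendsto
      (fun p => ∑ j₁ ∈ Finset.range (p + 1),
        ((∑ j ∈ Finset.range (p + 1), C j j j₁) -
          (1 / 2) * ∫ s in t..T, ψ₃ s * ψ₂ s * ∫ u in t..s, ψ₁ u * φ j₁ u) ^ 2)
      atTop (nhds 0) := by
  have hconvC : ∀ j₃ j₂ j₁ : ℕ, C j₃ j₂ j₁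
      = ∫ s in t..T, (s - t) ^ l₃ * Phi t T φ j₃ s *
          ∫ v in t..s, (v - t) ^ l₂ * Phi t T φ j₂ v *
            ∫ x in t..v, (x - t) ^ l₁ * Phi t T φ j₁ x := by
    intro j₃ j₂ j₁
    rw [hC]
    refine intervalIntegral.integral_congr fun s hs => ?_
    rw [Set.uIcc_of_le htT.le] at hs
    have hinner1 : ∀ v : ℝ, t ≤ v → v ≤ T →
        (∫ x in t..v, ψ₁ x * φ j₁ x) = ∫ x in t..v, (x - t) ^ l₁ * Phi t T φ j₁ x := by
      intro v h1 h2
      refine intervalIntegral.integral_congr fun x hx => ?_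
      rw [Set.uIcc_of_le h1] at hx
      rw [hψ₁, Phi_eq φ (⟨hx.1, hx.2.trans h2⟩ : x ∈ Set.Icc t T) j₁]
    have hinner2 : (∫ v in t..s, ψ₂ v * φ j₂ v * ∫ x in t..v, ψ₁ x * φ j₁ x)
        = ∫ v in t..s, (v - t) ^ l₂ * Phi t T φ j₂ v *
            ∫ x in t..v, (x - t) ^ l₁ * Phi t T φ j₁ x := by
      refine intervalIntegral.integral_congr fun v hv => ?_
      rw [Set.uIcc_of_le hs.1] at hv
      rw [hinner1 v hv.1 (hv.2.trans hs.2), hψ₂,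
        Phi_eq φ (⟨hv.1, hv.2.trans hs.2⟩ : v ∈ Set.Icc t T) j₂]
    rw [hinner2, hψ₃, Phi_eq φ hs j₃]
  have hconvT1 : ∀ j₃ : ℕ,
      (∫ s in t..T, ψ₃ s * φ j₃ s * ∫ u in t..s, ψ₁ u * ψ₂ u)
      = ∫ s in t..T, (s - t) ^ l₃ * Phi t T φ j₃ s * ∫ u in t..s, (u - t) ^ (l₁ + l₂) := by
    intro j₃
    refine intervalIntegral.integral_congr fun s hs => ?_
    rw [Set.uIcc_of_le htT.le] at hs
    have hin : (∫ u in t..s, ψ₁ u * ψ₂ u) = ∫ u in t..s, (u - t) ^ (l₁ + l₂) := by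
      refine intervalIntegral.integral_congr fun u _ => ?_
      rw [hψ₁, hψ₂]
      simp only []
      rw [pow_add]
    rw [hin, hψ₃, Phi_eq φ hs j₃]
  have hconvT2 : ∀ j₁ : ℕ,
      (∫ s in t..T, ψ₃ s * ψ₂ s * ∫ u in t..s, ψ₁ u * φ j₁ u)
      = ∫ s in t..T, (s - t) ^ (l₂ + l₃) * ∫ u in t..s, (u - t) ^ l₁ * Phi t T φ j₁ u := by
    intro j₁
    refine intervalIntegral.integral_congr fun s hs => ?_
    rw [Set.uIcc_of_le htT.le] at hs
    have hin : (∫ u in t..s, ψ₁ u * φ j₁ u) = ∫ u in t..s, (u - t) ^ l₁ * Phi t T φ j₁ u := by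
      refine intervalIntegral.integral_congr fun u hu => ?_
      rw [Set.uIcc_of_le hs.1] at hu
      rw [hψ₁, Phi_eq φ (⟨hu.1, hu.2.trans hs.2⟩ : u ∈ Set.Icc t T) j₁]
    rw [hin, hψ₃, hψ₂]
    simp only []
    rw [← pow_add, add_comm l₃ l₂]
  constructor
  · refine (main1 φ hφ_mem hφ_on hφ_complete htT l₁ l₂ l₃).congr fun p => ?_
    refine Finset.sum_congr rfl fun j₃ _ => ?_
    have e1 : ∑ j₁ ∈ Finset.range (p + 1), (∫ s in t..T, (s - t) ^ l₃ * Phi t T φ j₃ s *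
        ∫ y in t..s, (y - t) ^ l₂ * Phi t T φ j₁ y *
          ∫ x in t..y, (x - t) ^ l₁ * Phi t T φ j₁ x)
        = ∑ j₁ ∈ Finset.range (p + 1), C j₃ j₁ j₁ :=
      Finset.sum_congr rfl fun j₁ _ => (hconvC j₃ j₁ j₁).symm
    rw [e1, ← hconvT1 j₃]
  · refine (main2 φ hφ_mem hφ_on hφ_complete htT l₁ l₂ l₃).congr fun p => ?_
    refine Finset.sum_congr rfl fun j₁ _ => ?_
    have e1 : ∑ j ∈ Finset.range (p + 1), (∫ s in t..T, (s - t) ^ l₃ * Phi t T φ j s *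
        ∫ v in t..s, (v - t) ^ l₂ * Phi t T φ j v *
          ∫ x in t..v, (x - t) ^ l₁ * Phi t T φ j₁ x)
        = ∑ j ∈ Finset.range (p + 1), C j j j₁ :=
      Finset.sum_congr rfl fun j _ => (hconvC j j j₁).symm
    rw [e1, ← hconvT2 j₁]
end

section
/- Let 0 ≤ t < T, let {φ_j}_{j=0}^∞ be an arbitrary complete orthonormal system of L²([t,T],ℝ), and let ψ_i(τ) = (τ − t)^{l_i} with l_i ∈ ℕ ∪ {0} for i = 1, 2, 3. Then lim_{p→∞} Σ_{j₂=0}^p ( Σ_{j=0}^p C_{j j₂ j} )² = 0. -/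
open MeasureTheory Filter Finset

/-- condition (july700000) for k = 3, r = 1, non-adjacent pair {1,3},
for power weight functions `ψᵢ(τ) = (τ − t)^{lᵢ}` and an arbitrary CONS:
`lim_{p→∞} Σ_{j₂=0}^p (Σ_{j=0}^p C_{j j₂ j})² = 0`. -/
theorem stmt9
    (t T : ℝ) (ht : 0 ≤ t) (htT : t < T)
    (φ : ℕ → ℝ → ℝ)
    (hφ_mem : ∀ j, MemLp (φ j) 2 (volume.restrict (Set.Icc t T)))
    (hφ_on : ∀ i j, (∫ x in Set.Icc t T, φ i x * φ j x) = if i = j then (1 : ℝ) else 0)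
    (hφ_complete : ∀ f : ℝ → ℝ, MemLp f 2 (volume.restrict (Set.Icc t T)) →
      (∀ j, (∫ x in Set.Icc t T, f x * φ j x) = 0) →
      f =ᵐ[volume.restrict (Set.Icc t T)] 0)
    (l₁ l₂ l₃ : ℕ) (ψ₁ ψ₂ ψ₃ : ℝ → ℝ)
    (hψ₁ : ψ₁ = fun τ => (τ - t) ^ l₁)
    (hψ₂ : ψ₂ = fun τ => (τ - t) ^ l₂)
    (hψ₃ : ψ₃ = fun τ => (τ - t) ^ l₃)
    (C : ℕ → ℕ → ℕ → ℝ)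
    (hC : ∀ j₃ j₂ j₁, C j₃ j₂ j₁ =
      ∫ t₃ in t..T, ψ₃ t₃ * φ j₃ t₃ *
        ∫ t₂ in t..t₃, ψ₂ t₂ * φ j₂ t₂ *
          ∫ t₁ in t..t₂, ψ₁ t₁ * φ j₁ t₁) :
    Tendsto
      (fun p => ∑ j₂ ∈ Finset.range (p + 1),
        (∑ j ∈ Finset.range (p + 1), C j j₂ j) ^ 2)
      atTop (nhds 0) := by
  set ν := volume.restrict (Set.Icc t T) with hν
  haveI : IsFiniteMeasure ν := by
    constructor
    rw [hν, Measure.restrict_apply_univ, Real.volume_Icc]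
    exact ENNReal.ofReal_lt_top
  have hνuniv : (ν Set.univ).toReal = T - t := by
    rw [hν, Measure.restrict_apply_univ, Real.volume_Icc,
      ENNReal.toReal_ofReal (by linarith)]
  -- continuity and bounds for the weight functions
  have hψ₁c : Continuous ψ₁ := by rw [hψ₁]; fun_prop
  have hψ₂c : Continuous ψ₂ := by rw [hψ₂]; fun_prop
  have hψ₃c : Continuous ψ₃ := by rw [hψ₃]; fun_prop
  have hpowbd : ∀ (l : ℕ) (x : ℝ), x ∈ Set.Icc t T → ‖(x - t) ^ l‖ ≤ (T - t) ^ l := by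
    intro l x hx
    rw [Real.norm_eq_abs, abs_of_nonneg (pow_nonneg (by linarith [hx.1]) _)]
    exact pow_le_pow_left₀ (by linarith [hx.1]) (by linarith [hx.2]) _
  have hψ₁bd : ∀ x ∈ Set.Icc t T, ‖ψ₁ x‖ ≤ (T - t) ^ l₁ := fun x hx => by
    rw [hψ₁]; exact hpowbd l₁ x hx
  have hψ₂bd : ∀ x ∈ Set.Icc t T, ‖ψ₂ x‖ ≤ (T - t) ^ l₂ := fun x hx => by
    rw [hψ₂]; exact hpowbd l₂ x hx
  have hψ₃bd : ∀ x ∈ Set.Icc t T, ‖ψ₃ x‖ ≤ (T - t) ^ l₃ := fun x hx => by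
    rw [hψ₃]; exact hpowbd l₃ x hx
  -- Hilbert space setup
  set e : ℕ → Lp ℝ 2 ν := fun j => (hφ_mem j).toLp (φ j) with he
  have key : ∀ (f g : ℝ → ℝ) (hf : MemLp f 2 ν) (hg : MemLp g 2 ν),
      (inner ℝ (hf.toLp f) (hg.toLp g) : ℝ) = ∫ x, f x * g x ∂ν := by
    intro f g hf hg
    rw [L2.inner_def]
    refine integral_congr_ae ?_
    filter_upwards [hf.coeFn_toLp, hg.coeFn_toLp] with x h1 h2
    rw [h1, h2, RCLike.inner_apply, conj_trivial, mul_comm]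
  have he_on : Orthonormal ℝ e := by
    rw [orthonormal_iff_ite]
    intro i j
    rw [he, key, ← hφ_on i j]
  have hbot : (Submodule.span ℝ (Set.range e))ᗮ = ⊥ := by
    rw [Submodule.eq_bot_iff]
    intro x hx
    rw [Submodule.mem_orthogonal] at hx
    have hx' : ∀ j, (inner ℝ (e j) x : ℝ) = 0 := fun j =>
      hx (e j) (Submodule.subset_span ⟨j, rfl⟩)
    have hxm : MemLp (⇑x) 2 ν := Lp.memLp x
    have hz : (⇑x : ℝ → ℝ) =ᵐ[ν] 0 := by
      apply hφ_complete _ hxm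
      intro j
      have h3 := key (⇑x) (φ j) hxm (hφ_mem j)
      rw [Lp.toLp_coeFn x hxm] at h3
      rw [← h3, ← real_inner_comm]
      exact hx' j
    exact Lp.eq_zero_iff_ae_eq_zero.mpr hz
  set b : HilbertBasis ℕ ℝ (Lp ℝ 2 ν) := HilbertBasis.mkOfOrthogonalEqBot he_on hbot with hb
  have hbe : ∀ j, b j = e j := fun j => by
    rw [hb, HilbertBasis.coe_mkOfOrthogonalEqBot]
  -- products with φ j are in L², hence integrable
  have hmul_mem : ∀ (g : ℝ → ℝ), Continuous g → ∀ j,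
      MemLp (fun x => g x * φ j x) 2 ν := by
    intro g hg j
    obtain ⟨K, hK⟩ := isCompact_Icc.exists_bound_of_continuousOn hg.continuousOn
    have hgtop : MemLp g ⊤ ν := by
      refine memLp_top_of_bound hg.aestronglyMeasurable K ?_
      rw [hν]
      filter_upwards [ae_restrict_mem measurableSet_Icc] with x hx
      exact hK x hx
    have h : MemLp (φ j • g) 2 ν := MemLp.smul hgtop (hφ_mem j)
    have heq : (φ j • g) = (fun x => g x * φ j x) := by
      funext x; simp [Pi.smul_apply, smul_eq_mul, mul_comm]
    rwa [heq] at h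
  have hmul_int : ∀ (g : ℝ → ℝ), Continuous g → ∀ j,
      Integrable (fun x => g x * φ j x) ν := fun g hg j =>
    (hmul_mem g hg j).integrable one_le_two
  -- primitives
  set A : ℕ → ℝ → ℝ := fun j s => ∫ x in t..s, ψ₁ x * φ j x ∂ν with hA
  set A3 : ℕ → ℝ → ℝ := fun j s => ∫ x in t..s, ψ₃ x * φ j x ∂ν with hA3
  set B : ℕ → ℝ → ℝ := fun j s => A3 j T - A3 j s with hB
  have hAcont : ∀ j, Continuous (A j) := fun j =>
    (hmul_int ψ₁ hψ₁c j).continuous_primitive t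
  have hA3cont : ∀ j, Continuous (A3 j) := fun j =>
    (hmul_int ψ₃ hψ₃c j).continuous_primitive t
  have hBcont : ∀ j, Continuous (B j) := fun j =>
    continuous_const.sub (hA3cont j)
  have hsub : ∀ {a c : ℝ}, t ≤ a → c ≤ T → Set.Ioc a c ⊆ Set.Icc t T := by
    intro a c hta hcT x hx
    exact ⟨le_trans hta (le_of_lt hx.1), le_trans hx.2 hcT⟩
  -- A as set integral over ν
  have hAset : ∀ j s, t ≤ s → A j s = ∫ x in Set.Ioc t s, ψ₁ x * φ j x ∂ν := by
    intro j s hts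
    simp only [hA]
    rw [intervalIntegral.integral_of_le hts]
  -- A as volume interval integral
  have hAvol : ∀ j s, t ≤ s → s ≤ T → A j s = ∫ x in t..s, ψ₁ x * φ j x := by
    intro j s hts hsT
    rw [hAset j s hts, intervalIntegral.integral_of_le hts, hν,
      Measure.restrict_restrict measurableSet_Ioc,
      Set.inter_eq_self_of_subset_left (hsub le_rfl hsT)]
  -- B as interval integral over ν, set integral, and volume integral
  have hBint : ∀ j s, B j s = ∫ x in s..T, ψ₃ x * φ j x ∂ν := by
    intro j s
    have h1 : IntervalIntegrable (fun x => ψ₃ x * φ j x) ν t s :=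
      (hmul_int ψ₃ hψ₃c j).intervalIntegrable
    have h2 : IntervalIntegrable (fun x => ψ₃ x * φ j x) ν s T :=
      (hmul_int ψ₃ hψ₃c j).intervalIntegrable
    have := intervalIntegral.integral_add_adjacent_intervals h1 h2
    simp only [hB, hA3] at this ⊢
    linarith [this]
  have hBset : ∀ j s, s ≤ T → B j s = ∫ x in Set.Ioc s T, ψ₃ x * φ j x ∂ν := by
    intro j s hsT
    rw [hBint j s, intervalIntegral.integral_of_le hsT]
  have hBvol : ∀ j s, t ≤ s → s ≤ T → B j s = ∫ x in s..T, ψ₃ x * φ j x := by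
    intro j s hts hsT
    rw [hBset j s hsT, intervalIntegral.integral_of_le hsT, hν,
      Measure.restrict_restrict measurableSet_Ioc,
      Set.inter_eq_self_of_subset_left (hsub hts le_rfl)]
  -- the key Fubini identity
  have hC_eq : ∀ j j₂, C j j₂ j =
      ∫ s, φ j₂ s * (ψ₂ s * (A j s * B j s)) ∂ν := by
    intro j j₂
    obtain ⟨KA, hKA⟩ := isCompact_Icc.exists_bound_of_continuousOn (hAcont j).continuousOn
    set g2 : ℝ → ℝ := fun y => ψ₂ y * φ j₂ y * A j y with hg2
    have h0 : Integrable (fun y => A j y * (ψ₂ y * φ j₂ y)) ν := by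
      refine Integrable.bdd_mul (c := KA) (hmul_int ψ₂ hψ₂c j₂) (hAcont j).aestronglyMeasurable ?_
      rw [hν]
      filter_upwards [ae_restrict_mem measurableSet_Icc] with x hx
      exact hKA x hx
    have hg2int : Integrable g2 ν :=
      h0.congr (Eventually.of_forall fun y => by simp only [hg2]; ring)
    have hf3int : Integrable (fun x => ψ₃ x * φ j x) ν := hmul_int ψ₃ hψ₃c j
    set H : ℝ × ℝ → ℝ :=
      fun q => Set.indicator {q : ℝ × ℝ | q.2 ≤ q.1}
        (fun q => (ψ₃ q.1 * φ j q.1) * g2 q.2) q with hH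
    have hHmeas : MeasurableSet {q : ℝ × ℝ | q.2 ≤ q.1} :=
      (isClosed_le continuous_snd continuous_fst).measurableSet
    have hHint : Integrable H (ν.prod ν) :=
      (hf3int.mul_prod hg2int).indicator hHmeas
    have step1 : C j j₂ j = ∫ t₃ in t..T, (ψ₃ t₃ * φ j t₃) * ∫ t₂ in t..t₃, g2 t₂ := by
      rw [hC j j₂ j]
      refine intervalIntegral.integral_congr ?_
      intro t₃ ht₃
      rw [Set.uIcc_of_le (le_of_lt htT)] at ht₃
      have hin : (∫ t₂ in t..t₃, ψ₂ t₂ * φ j₂ t₂ * ∫ t₁ in t..t₂, ψ₁ t₁ * φ j t₁)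
           = ∫ t₂ in t..t₃, g2 t₂ := by
        refine intervalIntegral.integral_congr ?_
        intro t₂ ht₂
        rw [Set.uIcc_of_le ht₃.1] at ht₂
        simp only [hg2]
        rw [← hAvol j t₂ ht₂.1 (le_trans ht₂.2 ht₃.2)]
      simp only []
      rw [hin]
    have step2 : (∫ t₃ in t..T, (ψ₃ t₃ * φ j t₃) * ∫ t₂ in t..t₃, g2 t₂)
        = ∫ x, (∫ y, H (x, y) ∂ν) ∂ν := by
      rw [intervalIntegral.integral_of_le (le_of_lt htT), ← integral_Icc_eq_integral_Ioc,
        ← hν]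
      refine integral_congr_ae ?_
      rw [hν]
      filter_upwards [ae_restrict_mem measurableSet_Icc] with x hx
      have h1 : (fun y => H (x, y))
          = Set.indicator (Set.Iic x) (fun y => (ψ₃ x * φ j x) * g2 y) := by
        funext y
        simp only [hH, Set.indicator_apply, Set.mem_setOf_eq, Set.mem_Iic]
      have h2 : (∫ t₂ in t..x, g2 t₂) = ∫ y in Set.Iic x, g2 y ∂ν := by
        rw [intervalIntegral.integral_of_le hx.1, hν,
          Measure.restrict_restrict measurableSet_Iic]
        have : Set.Iic x ∩ Set.Icc t T = Set.Icc t x := by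
          ext y
          constructor
          · rintro ⟨h1', h2'⟩; exact ⟨h2'.1, h1'⟩
          · rintro ⟨h1', h2'⟩; exact ⟨h2', h1', le_trans h2' hx.2⟩
        rw [this, integral_Icc_eq_integral_Ioc]
      rw [h1, integral_indicator measurableSet_Iic, integral_const_mul, ← h2]
    have step3 : (∫ x, (∫ y, H (x, y) ∂ν) ∂ν) = ∫ y, (∫ x, H (x, y) ∂ν) ∂ν := by
      have huncurry : Integrable (Function.uncurry fun x y => H (x, y)) (ν.prod ν) := by
        have : (Function.uncurry fun x y => H (x, y)) = H := by
          funext q; rfl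
        rwa [this]
      exact integral_integral_swap huncurry
    have step4 : (∫ y, (∫ x, H (x, y) ∂ν) ∂ν)
        = ∫ y, φ j₂ y * (ψ₂ y * (A j y * B j y)) ∂ν := by
      refine integral_congr_ae ?_
      rw [hν]
      filter_upwards [ae_restrict_mem measurableSet_Icc] with y hy
      have h1 : (fun x => H (x, y))
          = fun x => Set.indicator (Set.Ici y) (fun x => ψ₃ x * φ j x) x * g2 y := by
        funext x
        simp only [hH, Set.indicator_apply, Set.mem_setOf_eq, Set.mem_Ici]
        by_cases h : y ≤ x <;> simp [h]
      have h2 : (∫ x in Set.Ici y, ψ₃ x * φ j x ∂ν) = B j y := by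
        rw [hBset j y hy.2, hν, Measure.restrict_restrict measurableSet_Ici,
          Measure.restrict_restrict measurableSet_Ioc,
          Set.inter_eq_self_of_subset_left (hsub hy.1 le_rfl)]
        have : Set.Ici y ∩ Set.Icc t T = Set.Icc y T := by
          ext z
          constructor
          · rintro ⟨h1', h2'⟩; exact ⟨h1', h2'.2⟩
          · rintro ⟨h1', h2'⟩; exact ⟨h1', le_trans hy.1 h1', h2'⟩
        rw [this, integral_Icc_eq_integral_Ioc]
      rw [h1, integral_mul_const, integral_indicator measurableSet_Ici, h2]
      simp only [hg2]
      ring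
    rw [step1, step2, step3, step4]
  -- the function G p
  set G : ℕ → ℝ → ℝ := fun p s => ψ₂ s * ∑ j ∈ Finset.range (p + 1), A j s * B j s with hG
  have hGcont : ∀ p, Continuous (G p) := by
    intro p
    apply hψ₂c.mul
    exact continuous_finset_sum _ (fun j _ => (hAcont j).mul (hBcont j))
  have hGmem : ∀ p, MemLp (G p) 2 ν := by
    intro p
    obtain ⟨K0, hK0⟩ := isCompact_Icc.exists_bound_of_continuousOn (hGcont p).continuousOn
    refine MemLp.of_bound (hGcont p).aestronglyMeasurable K0 ?_
    rw [hν]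
    filter_upwards [ae_restrict_mem measurableSet_Icc] with x hx
    exact hK0 x hx
  -- partial sums are Fourier coefficients of G p
  have hSum : ∀ p j₂, (∑ j ∈ Finset.range (p + 1), C j j₂ j)
      = (inner ℝ (e j₂) ((hGmem p).toLp (G p)) : ℝ) := by
    intro p j₂
    have hint : ∀ j : ℕ, Integrable (fun s => φ j₂ s * (ψ₂ s * (A j s * B j s))) ν := by
      intro j
      obtain ⟨K1, hK1⟩ := isCompact_Icc.exists_bound_of_continuousOn
        ((hψ₂c.mul ((hAcont j).mul (hBcont j)))).continuousOn
      have h0 : Integrable (fun s => (ψ₂ s * (A j s * B j s)) * φ j₂ s) ν := by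
        refine Integrable.bdd_mul (c := K1) ((hφ_mem j₂).integrable one_le_two)
          (hψ₂c.mul ((hAcont j).mul (hBcont j))).aestronglyMeasurable ?_
        rw [hν]
        filter_upwards [ae_restrict_mem measurableSet_Icc] with x hx
        exact hK1 x hx
      exact h0.congr (Eventually.of_forall fun s => by ring)
    have hkey := key (φ j₂) (G p) (hφ_mem j₂) (hGmem p)
    calc (∑ j ∈ Finset.range (p + 1), C j j₂ j)
        = ∑ j ∈ Finset.range (p + 1), ∫ s, φ j₂ s * (ψ₂ s * (A j s * B j s)) ∂ν :=
          Finset.sum_congr rfl fun j _ => hC_eq j j₂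
      _ = ∫ s, ∑ j ∈ Finset.range (p + 1), φ j₂ s * (ψ₂ s * (A j s * B j s)) ∂ν :=
          (integral_finset_sum _ (fun j _ => hint j)).symm
      _ = ∫ s, φ j₂ s * G p s ∂ν := by
          refine integral_congr_ae (Eventually.of_forall fun s => ?_)
          simp only [hG, Finset.mul_sum]
          try exact Finset.sum_congr rfl fun j _ => by ring
      _ = inner ℝ (e j₂) ((hGmem p).toLp (G p)) := by rw [he]; exact hkey.symm
  -- constants
  have hM₁0 : (0:ℝ) ≤ (T - t) ^ l₁ := pow_nonneg (by linarith) _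
  have hM₂0 : (0:ℝ) ≤ (T - t) ^ l₂ := pow_nonneg (by linarith) _
  have hM₃0 : (0:ℝ) ≤ (T - t) ^ l₃ := pow_nonneg (by linarith) _
  -- indicator functions
  have hindbd : ∀ (ψ : ℝ → ℝ) (M : ℝ) (S : Set ℝ), 0 ≤ M → S ⊆ Set.Icc t T →
      (∀ x ∈ Set.Icc t T, ‖ψ x‖ ≤ M) → ∀ x, ‖Set.indicator S ψ x‖ ≤ M := by
    intro ψ M S hM hS hψ x
    by_cases hx : x ∈ S
    · rw [Set.indicator_of_mem hx]; exact hψ x (hS hx)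
    · rw [Set.indicator_of_notMem hx]; simpa using hM
  have hind_mem : ∀ (ψ : ℝ → ℝ) (M : ℝ) (S : Set ℝ), MeasurableSet S → Continuous ψ → 0 ≤ M →
      S ⊆ Set.Icc t T → (∀ x ∈ Set.Icc t T, ‖ψ x‖ ≤ M) → MemLp (Set.indicator S ψ) 2 ν := by
    intro ψ M S hSm hψc hM hS hψ
    exact MemLp.of_bound (hψc.aestronglyMeasurable.indicator hSm) M
      (Eventually.of_forall (hindbd ψ M S hM hS hψ))
  -- Fourier coefficients of the indicator functions
  have hAu : ∀ s, t ≤ s → ∀ (h : MemLp (Set.indicator (Set.Ioc t s) ψ₁) 2 ν) (j : ℕ),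
      (inner ℝ (e j) (h.toLp _) : ℝ) = A j s := by
    intro s hts h j
    rw [he, key]
    have hpt : ∀ x, φ j x * Set.indicator (Set.Ioc t s) ψ₁ x
        = Set.indicator (Set.Ioc t s) (fun x => ψ₁ x * φ j x) x := by
      intro x
      by_cases hx : x ∈ Set.Ioc t s <;>
        simp [Set.indicator_of_mem, Set.indicator_of_notMem, hx, mul_comm]
    have h4 : (∫ x, φ j x * Set.indicator (Set.Ioc t s) ψ₁ x ∂ν)
        = ∫ x, Set.indicator (Set.Ioc t s) (fun x => ψ₁ x * φ j x) x ∂ν :=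
      integral_congr_ae (Eventually.of_forall hpt)
    rw [h4, integral_indicator measurableSet_Ioc, ← hAset j s hts]
  have hBv : ∀ s, s ≤ T → ∀ (h : MemLp (Set.indicator (Set.Ioc s T) ψ₃) 2 ν) (j : ℕ),
      (inner ℝ (e j) (h.toLp _) : ℝ) = B j s := by
    intro s hsT h j
    rw [he, key]
    have hpt : ∀ x, φ j x * Set.indicator (Set.Ioc s T) ψ₃ x
        = Set.indicator (Set.Ioc s T) (fun x => ψ₃ x * φ j x) x := by
      intro x
      by_cases hx : x ∈ Set.Ioc s T <;>
        simp [Set.indicator_of_mem, Set.indicator_of_notMem, hx, mul_comm]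
    have h4 : (∫ x, φ j x * Set.indicator (Set.Ioc s T) ψ₃ x ∂ν)
        = ∫ x, Set.indicator (Set.Ioc s T) (fun x => ψ₃ x * φ j x) x ∂ν :=
      integral_congr_ae (Eventually.of_forall hpt)
    rw [h4, integral_indicator measurableSet_Ioc, ← hBset j s hsT]
  -- norm bound for indicator functions
  have hnorm_ind : ∀ (ψ : ℝ → ℝ) (M : ℝ) (S : Set ℝ), 0 ≤ M → S ⊆ Set.Icc t T →
      (∀ x ∈ Set.Icc t T, ‖ψ x‖ ≤ M) →
      ∀ (h : MemLp (Set.indicator S ψ) 2 ν), ‖h.toLp _‖ ^ 2 ≤ M ^ 2 * (T - t) := by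
    intro ψ M S hM hS hψ h
    have h1 : (‖h.toLp _‖ : ℝ) ^ 2 = ∫ x, Set.indicator S ψ x * Set.indicator S ψ x ∂ν := by
      rw [← real_inner_self_eq_norm_sq, key]
    rw [h1]
    have h2 : (∫ x, Set.indicator S ψ x * Set.indicator S ψ x ∂ν)
        = ∫ x, (Set.indicator S ψ x) ^ 2 ∂ν :=
      integral_congr_ae (Eventually.of_forall fun x => (sq (Set.indicator S ψ x)).symm)
    rw [h2]
    calc (∫ x, (Set.indicator S ψ x) ^ 2 ∂ν) ≤ ∫ _, M ^ 2 ∂ν := by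
          refine integral_mono h.integrable_sq (integrable_const _) fun x => ?_
          have := hindbd ψ M S hM hS hψ x
          calc (Set.indicator S ψ x) ^ 2 = ‖Set.indicator S ψ x‖ ^ 2 := by
                rw [Real.norm_eq_abs, sq_abs]
            _ ≤ M ^ 2 := by
                exact pow_le_pow_left₀ (norm_nonneg _) this 2
      _ = M ^ 2 * (T - t) := by
          rw [integral_const, smul_eq_mul, measureReal_def, hνuniv, mul_comm]
  have hTt : (0:ℝ) ≤ T - t := by linarith
  -- pointwise convergence of (G p s)²
  have hptwise : ∀ s, t ≤ s → s ≤ T →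
      Tendsto (fun p => (G p s) ^ 2) atTop (nhds 0) := by
    intro s hts hsT
    have humem : MemLp (Set.indicator (Set.Ioc t s) ψ₁) 2 ν :=
      hind_mem ψ₁ ((T - t) ^ l₁) _ measurableSet_Ioc hψ₁c hM₁0 (hsub le_rfl hsT) hψ₁bd
    have hvmem : MemLp (Set.indicator (Set.Ioc s T) ψ₃) 2 ν :=
      hind_mem ψ₃ ((T - t) ^ l₃) _ measurableSet_Ioc hψ₃c hM₃0 (hsub hts le_rfl) hψ₃bd
    have hUV : (inner ℝ (humem.toLp _) (hvmem.toLp _) : ℝ) = 0 := by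
      rw [key]
      have hpt : ∀ x, Set.indicator (Set.Ioc t s) ψ₁ x * Set.indicator (Set.Ioc s T) ψ₃ x
          = 0 := by
        intro x
        by_cases hx : x ∈ Set.Ioc t s
        · rw [Set.indicator_of_notMem (s := Set.Ioc s T)
            (fun hx' => absurd hx'.1 (not_lt.mpr hx.2)), mul_zero]
        · rw [Set.indicator_of_notMem hx, zero_mul]
      have h4 : (∫ x, Set.indicator (Set.Ioc t s) ψ₁ x * Set.indicator (Set.Ioc s T) ψ₃ x ∂ν)
          = ∫ _, (0:ℝ) ∂ν := integral_congr_ae (Eventually.of_forall hpt)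
      rw [h4, integral_zero]
    have hsum0 : HasSum (fun j => A j s * B j s) 0 := by
      have h := b.hasSum_inner_mul_inner (humem.toLp _) (hvmem.toLp _)
      rw [hUV] at h
      have hfun : (fun j => (inner ℝ (humem.toLp _) (b j) : ℝ) * inner ℝ (b j) (hvmem.toLp _))
          = fun j => A j s * B j s := by
        funext j
        rw [hbe j, real_inner_comm, hAu s hts humem j, hBv s hsT hvmem j]
      rwa [hfun] at h
    have h5 : Tendsto (fun n => ∑ j ∈ Finset.range n, A j s * B j s) atTop (nhds 0) :=
      hsum0.tendsto_sum_nat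
    have h6 : Tendsto (fun p => ∑ j ∈ Finset.range (p+1), A j s * B j s) atTop (nhds 0) :=
      h5.comp (tendsto_add_atTop_nat 1)
    have h7 : Tendsto (fun p => G p s) atTop (nhds 0) := by
      have h8 := h6.const_mul (ψ₂ s)
      rw [mul_zero] at h8
      simpa only [hG] using h8
    have h9 := h7.pow 2
    simpa using h9
  -- uniform bound
  set K : ℝ := ((T-t)^l₂)^2 * ((((T-t)^l₁)^2 * (T - t)) * (((T-t)^l₃)^2 * (T - t))) with hKc
  have hGbd : ∀ p, ∀ s, t ≤ s → s ≤ T → (G p s) ^ 2 ≤ K := by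
    intro p s hts hsT
    have humem : MemLp (Set.indicator (Set.Ioc t s) ψ₁) 2 ν :=
      hind_mem ψ₁ ((T - t) ^ l₁) _ measurableSet_Ioc hψ₁c hM₁0 (hsub le_rfl hsT) hψ₁bd
    have hvmem : MemLp (Set.indicator (Set.Ioc s T) ψ₃) 2 ν :=
      hind_mem ψ₃ ((T - t) ^ l₃) _ measurableSet_Ioc hψ₃c hM₃0 (hsub hts le_rfl) hψ₃bd
    have hA2 : ∑ j ∈ Finset.range (p+1), (A j s)^2 ≤ ((T-t)^l₁)^2 * (T - t) := by
      have hb1 := he_on.sum_inner_products_le (x := humem.toLp _) (s := Finset.range (p+1))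
      have heq : ∑ j ∈ Finset.range (p+1), (A j s)^2
          = ∑ j ∈ Finset.range (p+1), ‖(inner ℝ (e j) (humem.toLp _) : ℝ)‖^2 :=
        Finset.sum_congr rfl fun j _ => by
          rw [hAu s hts humem j, Real.norm_eq_abs, sq_abs]
      rw [heq]
      exact hb1.trans (hnorm_ind ψ₁ _ _ hM₁0 (hsub le_rfl hsT) hψ₁bd humem)
    have hB2 : ∑ j ∈ Finset.range (p+1), (B j s)^2 ≤ ((T-t)^l₃)^2 * (T - t) := by
      have hb1 := he_on.sum_inner_products_le (x := hvmem.toLp _) (s := Finset.range (p+1))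
      have heq : ∑ j ∈ Finset.range (p+1), (B j s)^2
          = ∑ j ∈ Finset.range (p+1), ‖(inner ℝ (e j) (hvmem.toLp _) : ℝ)‖^2 :=
        Finset.sum_congr rfl fun j _ => by
          rw [hBv s hsT hvmem j, Real.norm_eq_abs, sq_abs]
      rw [heq]
      exact hb1.trans (hnorm_ind ψ₃ _ _ hM₃0 (hsub hts le_rfl) hψ₃bd hvmem)
    have hCS : (∑ j ∈ Finset.range (p+1), A j s * B j s)^2
        ≤ (∑ j ∈ Finset.range (p+1), (A j s)^2) * ∑ j ∈ Finset.range (p+1), (B j s)^2 :=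
      Finset.sum_mul_sq_le_sq_mul_sq _ _ _
    have hA2nn : (0:ℝ) ≤ ∑ j ∈ Finset.range (p+1), (A j s)^2 :=
      Finset.sum_nonneg fun j _ => sq_nonneg _
    have hB2nn : (0:ℝ) ≤ ∑ j ∈ Finset.range (p+1), (B j s)^2 :=
      Finset.sum_nonneg fun j _ => sq_nonneg _
    have hψ2sq : (ψ₂ s)^2 ≤ ((T-t)^l₂)^2 := by
      have := hψ₂bd s ⟨hts, hsT⟩
      calc (ψ₂ s)^2 = ‖ψ₂ s‖^2 := by rw [Real.norm_eq_abs, sq_abs]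
        _ ≤ ((T-t)^l₂)^2 := pow_le_pow_left₀ (norm_nonneg _) this 2
    have hGsq : (G p s)^2 = (ψ₂ s)^2 * (∑ j ∈ Finset.range (p+1), A j s * B j s)^2 := by
      simp only [hG]; ring
    rw [hGsq, hKc]
    have hprod : (∑ j ∈ Finset.range (p+1), A j s * B j s)^2
        ≤ (((T-t)^l₁)^2 * (T - t)) * (((T-t)^l₃)^2 * (T - t)) :=
      hCS.trans (mul_le_mul hA2 hB2 hB2nn (le_trans hA2nn hA2))
    exact mul_le_mul hψ2sq hprod (sq_nonneg _) (sq_nonneg _)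
  -- dominated convergence
  have hdct : Tendsto (fun p => ∫ s, (G p s)^2 ∂ν) atTop (nhds 0) := by
    rw [show (0:ℝ) = ∫ (_ : ℝ), (0:ℝ) ∂ν from (integral_zero _ _).symm]
    refine tendsto_integral_of_dominated_convergence (fun _ => K)
      (fun p => ((hGcont p).pow 2).aestronglyMeasurable) (integrable_const _)
      (fun p => ?_) ?_
    · rw [hν]
      filter_upwards [ae_restrict_mem measurableSet_Icc] with s hs
      rw [Real.norm_eq_abs, abs_of_nonneg (sq_nonneg _)]
      exact hGbd p s hs.1 hs.2
    · rw [hν]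
      filter_upwards [ae_restrict_mem measurableSet_Icc] with s hs
      exact hptwise s hs.1 hs.2
  -- squeeze
  refine squeeze_zero (fun p => Finset.sum_nonneg fun j₂ _ => sq_nonneg _) (fun p => ?_) hdct
  have hb1 := he_on.sum_inner_products_le (x := (hGmem p).toLp (G p)) (s := Finset.range (p+1))
  have hnorm : ‖(hGmem p).toLp (G p)‖^2 = ∫ s, (G p s)^2 ∂ν := by
    rw [← real_inner_self_eq_norm_sq, key]
    exact integral_congr_ae (Eventually.of_forall fun s => (sq _).symm)
  calc ∑ j₂ ∈ Finset.range (p+1), (∑ j ∈ Finset.range (p+1), C j j₂ j)^2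
      = ∑ j₂ ∈ Finset.range (p+1), ‖(inner ℝ (e j₂) ((hGmem p).toLp (G p)) : ℝ)‖^2 :=
        Finset.sum_congr rfl fun j₂ _ => by rw [hSum p j₂, Real.norm_eq_abs, sq_abs]
    _ ≤ ‖(hGmem p).toLp (G p)‖^2 := hb1
    _ = ∫ s, (G p s)^2 ∂ν := hnorm
end
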